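/- arXiv:0911.2995 — 8 statements merged into one kernel-verified Lean document; each statement's English description precedes it below -/
import Mathlib

section
/- For finite-dimensional Lie algebras a and b, the invariant α is additive: α(a ⊕ b) = α(a) + α(b), where α denotes the maximal dimension of an abelian subalgebra. -/
open Module

noncomputable def alphaInv (K L : Type*) [Field K] [LieRing L] [LieAlgebra K L] : ℕ :=
  sSup {n | ∃ a : LieSubalgebra K L, IsLieAbelian a ∧ finrank K a = n}

noncomputable def betaInv (K L : Type*) [Field K] [LieRing L] [LieAlgebra K L] : ℕ :=
  sSup {n | ∃ I : LieIdeal K L, IsLieAbelian I ∧ finrank K I = n}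

instance prodLieRing (L M : Type*) [LieRing L] [LieRing M] : LieRing (L × M) where
  bracket p q := (⁅p.1, q.1⁆, ⁅p.2, q.2⁆)
  add_lie x y z := Prod.ext (add_lie x.1 y.1 z.1) (add_lie x.2 y.2 z.2)
  lie_add x y z := Prod.ext (lie_add x.1 y.1 z.1) (lie_add x.2 y.2 z.2)
  lie_self x := Prod.ext (lie_self x.1) (lie_self x.2)
  leibniz_lie x y z := Prod.ext (leibniz_lie x.1 y.1 z.1) (leibniz_lie x.2 y.2 z.2)

instance prodLieAlgebra (K L M : Type*) [CommRing K] [LieRing L] [LieRing M]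
    [LieAlgebra K L] [LieAlgebra K M] : LieAlgebra K (L × M) where
  lie_smul t x y := Prod.ext (lie_smul t x.1 y.1) (lie_smul t x.2 y.2)

set_option linter.unusedSectionVars false

section Aux

variable (K A B : Type*) [Field K] [LieRing A] [LieAlgebra K A] [LieRing B] [LieAlgebra K B]

def fstLieHom : (A × B) →ₗ⁅K⁆ A := { toLinearMap := LinearMap.fst K A B, map_lie' := rfl }
def sndLieHom : (A × B) →ₗ⁅K⁆ B := { toLinearMap := LinearMap.snd K A B, map_lie' := rfl }

def prodSubalg (a : LieSubalgebra K A) (b : LieSubalgebra K B) : LieSubalgebra K (A × B) :=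
  { (a : Submodule K A).prod (b : Submodule K B) with
    lie_mem' := fun hx hy => ⟨a.lie_mem hx.1 hy.1, b.lie_mem hx.2 hy.2⟩ }

def subProdEquiv (p : Submodule K A) (q : Submodule K B) : (p.prod q) ≃ₗ[K] p × q where
  toFun x := (⟨x.1.1, x.2.1⟩, ⟨x.1.2, x.2.2⟩)
  invFun x := ⟨(x.1.1, x.2.1), x.1.2, x.2.2⟩
  map_add' _ _ := rfl
  map_smul' _ _ := rfl
  left_inv _ := rfl
  right_inv _ := rfl

variable [FiniteDimensional K A] [FiniteDimensional K B]

lemma finrank_prodSubalg (a : LieSubalgebra K A) (b : LieSubalgebra K B) :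
    finrank K (prodSubalg K A B a b) = finrank K a + finrank K b := by
  have : finrank K (prodSubalg K A B a b) =
      finrank K (↥(a : Submodule K A) × ↥(b : Submodule K B)) :=
    (subProdEquiv K A B a b).finrank_eq
  rw [this, Module.finrank_prod]; rfl

lemma abelian_prodSubalg (a : LieSubalgebra K A) (b : LieSubalgebra K B)
    (ha : IsLieAbelian a) (hb : IsLieAbelian b) : IsLieAbelian (prodSubalg K A B a b) := by
  constructor
  rintro ⟨⟨x1, x2⟩, hx1, hx2⟩ ⟨⟨y1, y2⟩, hy1, hy2⟩
  have h1 := ha.trivial ⟨x1, hx1⟩ ⟨y1, hy1⟩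
  have h2 := hb.trivial ⟨x2, hx2⟩ ⟨y2, hy2⟩
  ext
  · exact congrArg Subtype.val h1
  · exact congrArg Subtype.val h2

lemma abelian_map {L M : Type*} [LieRing L] [LieAlgebra K L] [LieRing M] [LieAlgebra K M]
    (f : L →ₗ⁅K⁆ M) (h : LieSubalgebra K L) (hh : IsLieAbelian h) :
    IsLieAbelian (h.map f) := by
  constructor
  rintro ⟨x, hx⟩ ⟨y, hy⟩
  obtain ⟨x', hx', rfl⟩ := hx
  obtain ⟨y', hy', rfl⟩ := hy
  have := hh.trivial ⟨x', hx'⟩ ⟨y', hy'⟩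
  have h0 : ⁅x', y'⁆ = 0 := congrArg Subtype.val this
  ext
  show ⁅f x', f y'⁆ = 0
  rw [← f.map_lie, h0, map_zero]

end Aux

section Main

variable (K L : Type*) [Field K] [LieRing L] [LieAlgebra K L] [FiniteDimensional K L]

lemma alpha_bdd : BddAbove {n | ∃ a : LieSubalgebra K L, IsLieAbelian a ∧ finrank K a = n} := by
  refine ⟨finrank K L, ?_⟩
  rintro n ⟨a, -, rfl⟩
  exact Submodule.finrank_le a.toSubmodule

lemma alpha_nonempty :
    {n | ∃ a : LieSubalgebra K L, IsLieAbelian a ∧ finrank K a = n}.Nonempty := by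
  refine ⟨finrank K (⊥ : LieSubalgebra K L), ⊥, ?_, rfl⟩
  constructor
  intro x y
  have hx : (x : L) = 0 := x.2
  have : x = 0 := Subtype.ext hx
  rw [this, zero_lie]

lemma alpha_mem : alphaInv K L ∈
    {n | ∃ a : LieSubalgebra K L, IsLieAbelian a ∧ finrank K a = n} :=
  Nat.sSup_mem (alpha_nonempty K L) (alpha_bdd K L)

lemma le_alpha {n : ℕ}
    (h : n ∈ {n | ∃ a : LieSubalgebra K L, IsLieAbelian a ∧ finrank K a = n}) :
    n ≤ alphaInv K L :=
  le_csSup (alpha_bdd K L) h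

end Main

/-- α is additive on direct sums. -/
theorem stmt_2 (K A B : Type*) [Field K] [LieRing A] [LieAlgebra K A] [LieRing B]
    [LieAlgebra K B] [FiniteDimensional K A] [FiniteDimensional K B] :
    alphaInv K (A × B) = alphaInv K A + alphaInv K B := by
  obtain ⟨a, haab, hfa⟩ := alpha_mem K A
  obtain ⟨b, hbab, hfb⟩ := alpha_mem K B
  apply le_antisymm
  · apply csSup_le (alpha_nonempty K (A × B))
    rintro n ⟨h, hab, rfl⟩
    have hle : h.toSubmodule ≤
        (prodSubalg K A B (h.map (fstLieHom K A B)) (h.map (sndLieHom K A B))).toSubmodule := by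
      rintro ⟨x1, x2⟩ hx
      exact ⟨⟨(x1, x2), hx, rfl⟩, ⟨(x1, x2), hx, rfl⟩⟩
    calc finrank K h ≤ finrank K
          (prodSubalg K A B (h.map (fstLieHom K A B)) (h.map (sndLieHom K A B))) :=
        Submodule.finrank_mono hle
      _ = finrank K (h.map (fstLieHom K A B)) + finrank K (h.map (sndLieHom K A B)) :=
        finrank_prodSubalg K A B _ _
      _ ≤ alphaInv K A + alphaInv K B :=
        Nat.add_le_add
          (le_alpha K A ⟨_, abelian_map K (fstLieHom K A B) h hab, rfl⟩)
          (le_alpha K B ⟨_, abelian_map K (sndLieHom K A B) h hab, rfl⟩)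
  · apply le_alpha K (A × B)
    exact ⟨prodSubalg K A B a b, abelian_prodSubalg K A B a b haab hbab,
      by rw [finrank_prodSubalg, hfa, hfb]⟩
end

section
/- Let g be an n-dimensional Lie algebra over a field of characteristic zero with α(g) = n−1. Then β(g) = n−1, i.e., g contains an abelian ideal of codimension 1. -/
open Module

lemma exists_functional {K V : Type*} [Field K] [AddCommGroup V] [Module K V]
    [FiniteDimensional K V] (p : Submodule K V) (x : V) (hx : x ∉ p)
    (hp : finrank K p + 1 = finrank K V) :
    ∃ f : V →ₗ[K] K, f x = 1 ∧ ∀ v, (f v = 0 ↔ v ∈ p) := by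
  have hq : finrank K (V ⧸ p) = 1 := by
    have := Submodule.finrank_quotient_add_finrank p; omega
  have hxq : (Submodule.Quotient.mk x : V ⧸ p) ≠ 0 := by
    simpa [Submodule.Quotient.mk_eq_zero] using hx
  set B := FiniteDimensional.basisSingleton Unit hq _ hxq with hB
  refine ⟨(B.coord default).comp p.mkQ, ?_, ?_⟩
  · have h1 : B default = (Submodule.Quotient.mk x : V ⧸ p) :=
      FiniteDimensional.basisSingleton_apply Unit hq _ hxq default
    simp only [LinearMap.comp_apply, Submodule.mkQ_apply, Basis.coord_apply, ← h1,
      Basis.repr_self, Finsupp.single_eq_same]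
  · intro v
    simp only [LinearMap.comp_apply, Submodule.mkQ_apply, Basis.coord_apply]
    constructor
    · intro h
      have : B.repr (Submodule.Quotient.mk v) = 0 := by
        apply Finsupp.unique_ext; simpa using h
      have : (Submodule.Quotient.mk v : V ⧸ p) = 0 := by
        simpa using congrArg B.repr.symm this
      simpa [Submodule.Quotient.mk_eq_zero] using this
    · intro h
      have : (Submodule.Quotient.mk v : V ⧸ p) = 0 := by
        simpa [Submodule.Quotient.mk_eq_zero] using h
      simp [this]

lemma key {K L : Type*} [Field K] [LieRing L] [LieAlgebra K L] [FiniteDimensional K L]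
    (a : LieSubalgebra K L) (hab : IsLieAbelian a) (ha1 : finrank K a + 1 = finrank K L) :
    ∃ I : LieIdeal K L, IsLieAbelian I ∧ finrank K I + 1 = finrank K L := by
  -- abelian in ambient terms
  have habL : ∀ y ∈ a, ∀ z ∈ a, ⁅y, z⁆ = (0 : L) := by
    intro y hy z hz
    have := hab.trivial ⟨y, hy⟩ ⟨z, hz⟩
    exact congrArg Subtype.val this
  -- find x outside a
  have hne : a.toSubmodule ≠ ⊤ := by
    intro h
    have : finrank K a.toSubmodule = finrank K L := by rw [h, finrank_top]
    have : finrank K a = finrank K L := this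
    omega
  obtain ⟨x, -, hx⟩ := SetLike.exists_of_lt ((lt_top_iff_ne_top.mpr hne) : a.toSubmodule < ⊤)
  obtain ⟨f, hfx, hker⟩ := exists_functional a.toSubmodule x hx ha1
  have hmem : ∀ v : L, v ∈ a ↔ f v = 0 := fun v => (hker v).symm
  -- decomposition
  have hdec : ∀ z : L, z - f z • x ∈ a := by
    intro z
    rw [hmem]
    simp [hfx]
  -- star identity
  have hstar : ∀ y ∈ a, ∀ z ∈ a, f ⁅x, y⁆ • ⁅x, z⁆ = f ⁅x, z⁆ • ⁅x, y⁆ := by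
    intro y hy z hz
    have hyz : ⁅y, z⁆ = (0 : L) := habL y hy z hz
    have hjac : ⁅x, ⁅y, z⁆⁆ = ⁅⁅x, y⁆, z⁆ + ⁅y, ⁅x, z⁆⁆ := leibniz_lie x y z
    rw [hyz, lie_zero] at hjac
    -- ⁅⁅x,y⁆,z⁆ : write ⁅x,y⁆ = (⁅x,y⁆ - f⁅x,y⁆•x) + f⁅x,y⁆•x
    have e1 : ⁅⁅x, y⁆, z⁆ = f ⁅x, y⁆ • ⁅x, z⁆ := by
      have h1 : ⁅x, y⁆ = (⁅x, y⁆ - f ⁅x, y⁆ • x) + f ⁅x, y⁆ • x := by abel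
      calc ⁅⁅x, y⁆, z⁆ = ⁅(⁅x, y⁆ - f ⁅x, y⁆ • x) + f ⁅x, y⁆ • x, z⁆ := by rw [← h1]
        _ = ⁅⁅x, y⁆ - f ⁅x, y⁆ • x, z⁆ + f ⁅x, y⁆ • ⁅x, z⁆ := by
              rw [add_lie, smul_lie]
        _ = f ⁅x, y⁆ • ⁅x, z⁆ := by
              rw [habL _ (hdec ⁅x, y⁆) z hz, zero_add]
    have e2 : ⁅y, ⁅x, z⁆⁆ = - (f ⁅x, z⁆ • ⁅x, y⁆) := by
      have h1 : ⁅x, z⁆ = (⁅x, z⁆ - f ⁅x, z⁆ • x) + f ⁅x, z⁆ • x := by abel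
      calc ⁅y, ⁅x, z⁆⁆ = ⁅y, (⁅x, z⁆ - f ⁅x, z⁆ • x) + f ⁅x, z⁆ • x⁆ := by rw [← h1]
        _ = ⁅y, ⁅x, z⁆ - f ⁅x, z⁆ • x⁆ + f ⁅x, z⁆ • ⁅y, x⁆ := by
              rw [lie_add, lie_smul]
        _ = f ⁅x, z⁆ • ⁅y, x⁆ := by
              rw [habL y hy _ (hdec ⁅x, z⁆), zero_add]
        _ = - (f ⁅x, z⁆ • ⁅x, y⁆) := by rw [← lie_skew y x, smul_neg]
    rw [e1, e2] at hjac
    linear_combination (norm := module) -hjac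
  by_cases hcase : ∀ y ∈ a, ⁅x, y⁆ ∈ a
  · -- a itself is an ideal
    refine ⟨{ a.toSubmodule with lie_mem := ?_ }, ?_, ?_⟩
    · intro z w hw
      have hw' : w ∈ a := hw
      have hz : z = (z - f z • x) + f z • x := by abel
      have : ⁅z, w⁆ = ⁅z - f z • x, w⁆ + f z • ⁅x, w⁆ := by
        calc ⁅z, w⁆ = ⁅(z - f z • x) + f z • x, w⁆ := by rw [← hz]
          _ = ⁅z - f z • x, w⁆ + f z • ⁅x, w⁆ := by rw [add_lie, smul_lie]
      rw [this, habL _ (hdec z) w hw', zero_add]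
      exact a.toSubmodule.smul_mem _ (hcase w hw')
    · constructor
      intro u v
      have : (⁅u.1, v.1⁆ : L) = 0 := habL u.1 u.2 v.1 v.2
      exact Subtype.ext this
    · exact ha1
  · push_neg at hcase
    obtain ⟨z₀, hz₀a, hz₀⟩ := hcase
    set c : K := f ⁅x, z₀⁆ with hc
    have hc0 : c ≠ 0 := by
      intro h; exact hz₀ ((hker _).mp h)
    set x' : L := c⁻¹ • ⁅x, z₀⁆ with hx'
    have hfx' : f x' = 1 := by
      rw [hx', map_smul, smul_eq_mul, ← hc, inv_mul_cancel₀ hc0]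
    have hx'0 : x' ≠ 0 := by
      intro h; rw [h, map_zero] at hfx'; exact one_ne_zero hfx'.symm
    -- h1 : for y in a, ⁅x, y⁆ = f⁅x,y⁆ • x'
    have h1 : ∀ y ∈ a, ⁅x, y⁆ = f ⁅x, y⁆ • x' := by
      intro y hy
      have h := hstar y hy z₀ hz₀a
      rw [hx', smul_comm, h, ← hc, smul_smul, inv_mul_cancel₀ hc0, one_smul]
    -- bracket of x' with members of a
    have h2a : ∀ y ∈ a, ⁅x', y⁆ = f ⁅x, y⁆ • x' := by
      intro y hy
      have hjac : ⁅x, ⁅z₀, y⁆⁆ = ⁅⁅x, z₀⁆, y⁆ + ⁅z₀, ⁅x, y⁆⁆ := leibniz_lie x z₀ y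
      rw [habL z₀ hz₀a y hy, lie_zero] at hjac
      have e2 : ⁅z₀, ⁅x, y⁆⁆ = - (f ⁅x, y⁆ • ⁅x, z₀⁆) := by
        have hd := hdec ⁅x, y⁆
        have h1' : ⁅x, y⁆ = (⁅x, y⁆ - f ⁅x, y⁆ • x) + f ⁅x, y⁆ • x := by abel
        calc ⁅z₀, ⁅x, y⁆⁆ = ⁅z₀, (⁅x, y⁆ - f ⁅x, y⁆ • x) + f ⁅x, y⁆ • x⁆ := by rw [← h1']
          _ = ⁅z₀, ⁅x, y⁆ - f ⁅x, y⁆ • x⁆ + f ⁅x, y⁆ • ⁅z₀, x⁆ := by rw [lie_add, lie_smul]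
          _ = f ⁅x, y⁆ • ⁅z₀, x⁆ := by rw [habL z₀ hz₀a _ hd, zero_add]
          _ = - (f ⁅x, y⁆ • ⁅x, z₀⁆) := by rw [← lie_skew z₀ x, smul_neg]
      have e1 : ⁅⁅x, z₀⁆, y⁆ = f ⁅x, y⁆ • ⁅x, z₀⁆ := by
        rw [e2] at hjac
        linear_combination (norm := module) -hjac
      rw [hx', smul_lie, e1, smul_comm]
    -- coefficient for ⁅x', x⁆
    obtain ⟨d₀, hd₀⟩ : ∃ d₀ : K, ⁅x', x⁆ = d₀ • x' := by
      have hφ : ⁅x, z₀⁆ - c • x ∈ a := hdec ⁅x, z₀⁆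
      refine ⟨-(c⁻¹ * f ⁅x, ⁅x, z₀⁆ - c • x⁆), ?_⟩
      have e : ⁅x, ⁅x, z₀⁆⁆ = f ⁅x, ⁅x, z₀⁆ - c • x⁆ • x' := by
        rw [show ⁅x, ⁅x, z₀⁆⁆ = ⁅x, ⁅x, z₀⁆ - c • x⁆ by
          rw [lie_sub, lie_smul, lie_self, smul_zero, sub_zero]]
        exact h1 _ hφ
      have sk : ⁅⁅x, z₀⁆, x⁆ = -⁅x, ⁅x, z₀⁆⁆ := by rw [← lie_skew ⁅x, z₀⁆ x]
      calc ⁅x', x⁆ = c⁻¹ • ⁅⁅x, z₀⁆, x⁆ := by rw [hx', smul_lie]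
        _ = c⁻¹ • -⁅x, ⁅x, z₀⁆⁆ := by rw [sk]
        _ = -(c⁻¹ * f ⁅x, ⁅x, z₀⁆ - c • x⁆) • x' := by rw [e]; module
    -- every bracket with x' is a multiple of x'
    have h2 : ∀ z : L, ∃ d : K, ⁅x', z⁆ = d • x' := by
      intro z
      refine ⟨f ⁅x, z - f z • x⁆ + f z * d₀, ?_⟩
      calc ⁅x', z⁆ = ⁅x', (z - f z • x) + f z • x⁆ := by rw [sub_add_cancel]
        _ = ⁅x', z - f z • x⁆ + f z • ⁅x', x⁆ := by rw [lie_add, lie_smul]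
        _ = f ⁅x, z - f z • x⁆ • x' + f z • d₀ • x' := by rw [h2a _ (hdec z), hd₀]
        _ = (f ⁅x, z - f z • x⁆ + f z * d₀) • x' := by module
    set N : Submodule K L := LinearMap.ker ((LieAlgebra.ad K L) x') with hNdef
    have hN : ∀ v : L, v ∈ N ↔ ⁅x', v⁆ = 0 := by
      intro v
      rw [hNdef, LinearMap.mem_ker, LieAlgebra.ad_apply]
    -- the key equation for members of N
    have keyN : ∀ w : L, w ∈ N → f ⁅x, w - f w • x⁆ = -(f w * d₀) := by
      intro w hw
      have hw' : ⁅x', w⁆ = 0 := (hN w).mp hw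
      have e : ⁅x', w⁆ = (f ⁅x, w - f w • x⁆ + f w * d₀) • x' := by
        calc ⁅x', w⁆ = ⁅x', (w - f w • x) + f w • x⁆ := by rw [sub_add_cancel]
          _ = ⁅x', w - f w • x⁆ + f w • ⁅x', x⁆ := by rw [lie_add, lie_smul]
          _ = f ⁅x, w - f w • x⁆ • x' + f w • d₀ • x' := by rw [h2a _ (hdec w), hd₀]
          _ = (f ⁅x, w - f w • x⁆ + f w * d₀) • x' := by module
      rw [hw'] at e
      have h0 := (smul_eq_zero.mp e.symm).resolve_right hx'0
      linear_combination h0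
    refine ⟨{ N with lie_mem := ?_ }, ?_, ?_⟩
    · intro z w hw
      have hw' : ⁅x', w⁆ = 0 := (hN w).mp hw
      refine (hN ⁅z, w⁆).mpr ?_
      obtain ⟨d, hd⟩ := h2 z
      calc ⁅x', ⁅z, w⁆⁆ = ⁅⁅x', z⁆, w⁆ + ⁅z, ⁅x', w⁆⁆ := leibniz_lie _ _ _
        _ = 0 := by rw [hw', lie_zero, add_zero, hd, smul_lie, hw', smul_zero]
    · constructor
      rintro ⟨w1, hw1⟩ ⟨w2, hw2⟩
      apply Subtype.ext
      show ⁅w1, w2⁆ = (0 : L)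
      have k1 := keyN w1 hw1
      have k2 := keyN w2 hw2
      have hy1 : w1 - f w1 • x ∈ a := hdec w1
      have hy2 : w2 - f w2 • x ∈ a := hdec w2
      have e0 : ⁅w1 - f w1 • x, w2 - f w2 • x⁆ = (0 : L) := habL _ hy1 _ hy2
      have eA : ⁅x, w1 - f w1 • x⁆ = f ⁅x, w1 - f w1 • x⁆ • x' := h1 _ hy1
      have eB : ⁅x, w2 - f w2 • x⁆ = f ⁅x, w2 - f w2 • x⁆ • x' := h1 _ hy2
      set s1 := f ⁅x, w1 - f w1 • x⁆ with hs1
      set s2 := f ⁅x, w2 - f w2 • x⁆ with hs2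
      have eA' : ⁅w1 - f w1 • x, x⁆ = -(s1 • x') := by
        rw [← lie_skew (w1 - f w1 • x) x, eA]
      calc ⁅w1, w2⁆ = ⁅(w1 - f w1 • x) + f w1 • x, (w2 - f w2 • x) + f w2 • x⁆ := by
            rw [sub_add_cancel, sub_add_cancel]
        _ = ⁅w1 - f w1 • x, w2 - f w2 • x⁆ + f w2 • ⁅w1 - f w1 • x, x⁆
            + f w1 • ⁅x, w2 - f w2 • x⁆ + f w1 • f w2 • ⁅x, x⁆ := by
            rw [add_lie, lie_add, lie_add, lie_smul, lie_smul, smul_lie, smul_lie]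
            module
        _ = 0 + f w2 • -(s1 • x') + f w1 • (s2 • x') + f w1 • f w2 • (0 : L) := by
            rw [e0, eA', eB, lie_self]
        _ = (f w1 * s2 - f w2 * s1) • x' := by module
        _ = 0 := by rw [k1, k2]; module
    · -- dimension count
      have hrange : LinearMap.range ((LieAlgebra.ad K L) x') ≤ Submodule.span K {x'} := by
        rintro v ⟨z, rfl⟩
        obtain ⟨d, hd⟩ := h2 z
        have : ((LieAlgebra.ad K L) x') z = d • x' := by rw [LieAlgebra.ad_apply, hd]
        rw [this]
        exact Submodule.smul_mem _ d (Submodule.mem_span_singleton_self x')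
      have hr1 : finrank K (LinearMap.range ((LieAlgebra.ad K L) x')) = 1 := by
        have hle : finrank K (LinearMap.range ((LieAlgebra.ad K L) x')) ≤ 1 := by
          have := Submodule.finrank_mono hrange
          rwa [finrank_span_singleton hx'0] at this
        have hnt : Nontrivial (LinearMap.range ((LieAlgebra.ad K L) x')) := by
          refine ⟨⟨⟨⁅x', z₀⁆, ⟨z₀, by rw [LieAlgebra.ad_apply]⟩⟩, 0, ?_⟩⟩
          intro hcon
          have : ⁅x', z₀⁆ = (0 : L) := congrArg Subtype.val hcon
          rw [h2a z₀ hz₀a] at this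
          exact smul_ne_zero (by rw [← hc]; exact hc0) hx'0 this
        have hpos : 0 < finrank K (LinearMap.range ((LieAlgebra.ad K L) x')) :=
          Module.finrank_pos_iff.mpr hnt
        omega
      have hrk := LinearMap.finrank_range_add_finrank_ker ((LieAlgebra.ad K L) x')
      show finrank K N + 1 = finrank K L
      rw [hNdef, ← hr1]
      omega

/-- If α(g) = n-1 then β(g) = n-1. -/
theorem stmt_5 (K L : Type*) [Field K] [CharZero K] [LieRing L] [LieAlgebra K L]
    [FiniteDimensional K L] (n : ℕ) (hn : finrank K L = n)
    (halpha : alphaInv K L = n - 1) : betaInv K L = n - 1 := by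
  subst hn
  set SA := {m | ∃ a : LieSubalgebra K L, IsLieAbelian a ∧ finrank K a = m} with hSA
  set SB := {m | ∃ I : LieIdeal K L, IsLieAbelian I ∧ finrank K I = m} with hSB
  have bddA : BddAbove SA := by
    refine ⟨finrank K L, ?_⟩
    rintro m ⟨a, -, rfl⟩
    exact Submodule.finrank_le a.toSubmodule
  have bddB : BddAbove SB := by
    refine ⟨finrank K L, ?_⟩
    rintro m ⟨J, -, rfl⟩
    exact Submodule.finrank_le (J : Submodule K L)
  have hBle : ∀ m ∈ SB, m ≤ finrank K L := by
    rintro m ⟨J, -, rfl⟩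
    exact Submodule.finrank_le (J : Submodule K L)
  by_cases h0 : finrank K L = 0
  · have : betaInv K L ≤ 0 := by
      apply csSup_le'
      rintro m ⟨J, -, rfl⟩
      have h1 := Submodule.finrank_le (LieSubmodule.toSubmodule J)
      have h2 : finrank K (LieSubmodule.toSubmodule J) = finrank K J := rfl
      omega
    omega
  -- n ≥ 1
  have hpos : 1 ≤ finrank K L := Nat.one_le_iff_ne_zero.mpr h0
  have neA : SA.Nonempty := by
    refine ⟨0, ⊥, ?_, ?_⟩
    · constructor
      rintro ⟨u, hu⟩ ⟨v, hv⟩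
      apply Subtype.ext
      rw [LieSubalgebra.mem_bot] at hu
      show ⁅u, v⁆ = (0 : L)
      rw [hu, zero_lie]
    · have : Subsingleton (⊥ : LieSubalgebra K L) := by
        constructor
        rintro ⟨u, hu⟩ ⟨v, hv⟩
        rw [LieSubalgebra.mem_bot] at hu hv
        exact Subtype.ext (hu.trans hv.symm)
      exact finrank_zero_of_subsingleton
  have hmemA : (finrank K L - 1) ∈ SA := by
    rw [← halpha]
    exact Nat.sSup_mem neA bddA
  obtain ⟨a, haab, hadim⟩ := hmemA
  have ha1 : finrank K a + 1 = finrank K L := by omega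
  obtain ⟨I, hIab, hIdim⟩ := key a haab ha1
  apply le_antisymm
  · apply csSup_le'
    rintro m ⟨J, hJab, rfl⟩
    by_contra hlt
    push_neg at hlt
    have hJle : finrank K J ≤ finrank K L := Submodule.finrank_le (LieSubmodule.toSubmodule J)
    have hJeq : finrank K (LieSubmodule.toSubmodule J) = finrank K L := by
      have : finrank K (LieSubmodule.toSubmodule J) = finrank K J := rfl
      omega
    have htop : LieSubmodule.toSubmodule J = ⊤ := Submodule.eq_top_of_finrank_eq hJeq
    have habtop : IsLieAbelian (⊤ : LieSubalgebra K L) := by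
      constructor
      rintro ⟨u, hu⟩ ⟨v, hv⟩
      apply Subtype.ext
      have hu' : u ∈ J := by
        rw [← LieSubmodule.mem_toSubmodule, htop]; exact Submodule.mem_top
      have hv' : v ∈ J := by
        rw [← LieSubmodule.mem_toSubmodule, htop]; exact Submodule.mem_top
      have := hJab.trivial ⟨u, hu'⟩ ⟨v, hv'⟩
      show ⁅u, v⁆ = (0 : L)
      exact congrArg Subtype.val this
    have hmem : finrank K L ∈ SA := by
      refine ⟨⊤, habtop, ?_⟩
      exact LinearEquiv.finrank_eq (LieSubalgebra.topEquiv (R := K) (L := L)).toLinearEquiv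
    have hle := le_csSup bddA hmem
    have hA : sSup SA = finrank K L - 1 := halpha
    omega
  · have hmem : (finrank K L - 1) ∈ SB := ⟨I, hIab, by omega⟩
    exact le_csSup bddB hmem
end

section
/- Let g be the 4-dimensional real Lie algebra with basis x1,x2,x3,x4 and brackets [x1,x2] = x2 − x3, [x1,x3] = x2 + x3, [x1,x4] = 2x4, [x2,x3] = x4. Then α(g) = 2 but β(g) = 1. -/
open Module

set_option maxHeartbeats 1000000 in
/-- The real 4-dimensional solvable Lie algebra with brackets
[x1,x2]=x2-x3, [x1,x3]=x2+x3, [x1,x4]=2x4, [x2,x3]=x4 (all other brackets zero)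
satisfies α(g) = 2 and β(g) = 1. -/
theorem stmt_8 (L : Type*) [LieRing L] [LieAlgebra ℝ L]
    (b : Basis (Fin 4) ℝ L)
    (h12 : ⁅b 0, b 1⁆ = b 1 - b 2) (h13 : ⁅b 0, b 2⁆ = b 1 + b 2)
    (h14 : ⁅b 0, b 3⁆ = (2 : ℝ) • b 3) (h23 : ⁅b 1, b 2⁆ = b 3)
    (h24 : ⁅b 1, b 3⁆ = 0) (h34 : ⁅b 2, b 3⁆ = 0) :
    alphaInv ℝ L = 2 ∧ betaInv ℝ L = 1 := by
  have h21 : ⁅b 1, b 0⁆ = -(b 1 - b 2) := by rw [← lie_skew, h12]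
  have h31 : ⁅b 2, b 0⁆ = -(b 1 + b 2) := by rw [← lie_skew, h13]
  have h41 : ⁅b 3, b 0⁆ = -((2:ℝ) • b 3) := by rw [← lie_skew, h14]
  have h32 : ⁅b 2, b 1⁆ = -(b 3) := by rw [← lie_skew, h23]
  have h42 : ⁅b 3, b 1⁆ = 0 := by rw [← lie_skew, h24, neg_zero]
  have h43 : ⁅b 3, b 2⁆ = 0 := by rw [← lie_skew, h34, neg_zero]
  -- the general bracket formula
  have brk : ∀ u v : L, ⁅u, v⁆ =
      (b.repr u 0 * b.repr v 1 - b.repr u 1 * b.repr v 0 +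
        (b.repr u 0 * b.repr v 2 - b.repr u 2 * b.repr v 0)) • b 1 +
      (-(b.repr u 0 * b.repr v 1 - b.repr u 1 * b.repr v 0) +
        (b.repr u 0 * b.repr v 2 - b.repr u 2 * b.repr v 0)) • b 2 +
      (2 * (b.repr u 0 * b.repr v 3 - b.repr u 3 * b.repr v 0) +
        (b.repr u 1 * b.repr v 2 - b.repr u 2 * b.repr v 1)) • b 3 := by
    intro u v
    conv_lhs => rw [← b.sum_repr u, ← b.sum_repr v]
    simp only [Fin.sum_univ_four, add_lie, lie_add, smul_lie, lie_smul, lie_self, smul_zero,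
      h12, h13, h14, h23, h24, h34, h21, h31, h41, h32, h42, h43]
    module
  -- coordinates of the bracket
  have rc0 : ∀ u v : L, b.repr ⁅u, v⁆ 0 = 0 := by
    intro u v
    rw [brk u v, map_add, map_add, map_smul, map_smul, map_smul]
    simp [Finsupp.add_apply, Finsupp.smul_apply, Basis.repr_self_apply]
  have rc1 : ∀ u v : L, b.repr ⁅u, v⁆ 1 =
      b.repr u 0 * b.repr v 1 - b.repr u 1 * b.repr v 0 +
        (b.repr u 0 * b.repr v 2 - b.repr u 2 * b.repr v 0) := by
    intro u v
    rw [brk u v, map_add, map_add, map_smul, map_smul, map_smul]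
    simp [Finsupp.add_apply, Finsupp.smul_apply, Basis.repr_self_apply]
  have rc2 : ∀ u v : L, b.repr ⁅u, v⁆ 2 =
      -(b.repr u 0 * b.repr v 1 - b.repr u 1 * b.repr v 0) +
        (b.repr u 0 * b.repr v 2 - b.repr u 2 * b.repr v 0) := by
    intro u v
    rw [brk u v, map_add, map_add, map_smul, map_smul, map_smul]
    simp [Finsupp.add_apply, Finsupp.smul_apply, Basis.repr_self_apply]
  have rc3 : ∀ u v : L, b.repr ⁅u, v⁆ 3 =
      2 * (b.repr u 0 * b.repr v 3 - b.repr u 3 * b.repr v 0) +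
        (b.repr u 1 * b.repr v 2 - b.repr u 2 * b.repr v 1) := by
    intro u v
    rw [brk u v, map_add, map_add, map_smul, map_smul, map_smul]
    simp [Finsupp.add_apply, Finsupp.smul_apply, Basis.repr_self_apply]
  -- vanishing criterion
  have eqz : ∀ v : L, b.repr v 0 = 0 → b.repr v 1 = 0 → b.repr v 2 = 0 → b.repr v 3 = 0 →
      v = 0 := by
    intro v e0 e1 e2 e3
    have h : b.repr v = 0 := by
      ext i; fin_cases i <;> simpa using (by assumption : _)
    simpa using congrArg b.repr.symm h
  -- bracket with b 3
  have vb3 : ∀ v : L, ⁅v, b 3⁆ = (2 * b.repr v 0) • b 3 := by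
    intro v
    rw [brk v (b 3)]
    simp [Basis.repr_self_apply]
  -- upper bound for abelian subalgebras
  have alpha_le : ∀ A : LieSubalgebra ℝ L, IsLieAbelian A → finrank ℝ A ≤ 2 := by
    intro A hA
    have ab : ∀ x y : L, x ∈ A → y ∈ A → ⁅x, y⁆ = 0 := by
      intro x y hx hy
      have h0 : (⁅(⟨x, hx⟩ : A), (⟨y, hy⟩ : A)⁆ : A) = 0 := hA.trivial _ _
      exact congrArg Subtype.val h0
    -- from abelian, coordinatewise equations
    have key : ∀ x y : L, x ∈ A → y ∈ A →
        (b.repr x 0 * b.repr y 1 = b.repr x 1 * b.repr y 0) ∧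
        (b.repr x 0 * b.repr y 2 = b.repr x 2 * b.repr y 0) ∧
        (2 * (b.repr x 0 * b.repr y 3 - b.repr x 3 * b.repr y 0) +
          (b.repr x 1 * b.repr y 2 - b.repr x 2 * b.repr y 1) = 0) := by
      intro x y hx hy
      have hz := ab x y hx hy
      have e1 := rc1 x y; have e2 := rc2 x y; have e3 := rc3 x y
      rw [hz] at e1 e2 e3
      simp only [map_zero, Finsupp.coe_zero, Pi.zero_apply] at e1 e2 e3
      refine ⟨by linarith, by linarith, by linarith⟩
    -- choose two coordinates depending on the shape of A
    have main : ∃ i j : Fin 4, ∀ x : L, x ∈ A →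
        b.repr x i = 0 → b.repr x j = 0 → x = 0 := by
      by_cases hc0 : ∃ u ∈ A, b.repr u 0 ≠ 0
      · obtain ⟨u, hu, hu0⟩ := hc0
        refine ⟨0, 3, fun x hx e0 e3 => ?_⟩
        obtain ⟨k1, k2, -⟩ := key u x hu hx
        rw [e0, mul_zero] at k1 k2
        have e1 : b.repr x 1 = 0 := by
          rcases mul_eq_zero.mp k1 with h | h
          · exact absurd h hu0
          · exact h
        have e2 : b.repr x 2 = 0 := by
          rcases mul_eq_zero.mp k2 with h | h
          · exact absurd h hu0
          · exact h
        exact eqz x e0 e1 e2 e3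
      · push_neg at hc0
        by_cases hc1 : ∃ u ∈ A, b.repr u 1 ≠ 0
        · obtain ⟨u, hu, hu1⟩ := hc1
          refine ⟨1, 3, fun x hx e1 e3 => ?_⟩
          have e0 : b.repr x 0 = 0 := hc0 x hx
          obtain ⟨-, -, k3⟩ := key u x hu hx
          rw [hc0 u hu, e0, e1] at k3
          have e2 : b.repr x 2 = 0 := by
            have : b.repr u 1 * b.repr x 2 = 0 := by linarith
            rcases mul_eq_zero.mp this with h | h
            · exact absurd h hu1
            · exact h
          exact eqz x e0 e1 e2 e3
        · push_neg at hc1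
          refine ⟨2, 3, fun x hx e2 e3 => ?_⟩
          exact eqz x (hc0 x hx) (hc1 x hx) e2 e3
    obtain ⟨i, j, hij⟩ := main
    -- build an injection into ℝ × ℝ
    let f : A.toSubmodule →ₗ[ℝ] ℝ × ℝ :=
      ((b.coord i).comp A.toSubmodule.subtype).prod ((b.coord j).comp A.toSubmodule.subtype)
    have hinj : Function.Injective f := by
      rw [← LinearMap.ker_eq_bot, LinearMap.ker_eq_bot']
      intro m hm
      have h1 : b.repr (m : L) i = 0 := congrArg Prod.fst hm
      have h2 : b.repr (m : L) j = 0 := congrArg Prod.snd hm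
      have : (m : L) = 0 := hij (m : L) m.2 h1 h2
      exact Subtype.ext this
    calc finrank ℝ A = finrank ℝ A.toSubmodule := rfl
      _ ≤ finrank ℝ (ℝ × ℝ) := LinearMap.finrank_le_finrank_of_injective hinj
      _ = 2 := by simp
  -- upper bound for abelian ideals
  have beta_le : ∀ I : LieIdeal ℝ L, IsLieAbelian I → finrank ℝ I ≤ 1 := by
    intro I hI
    have ab : ∀ x y : L, x ∈ I → y ∈ I → ⁅x, y⁆ = 0 := by
      intro x y hx hy
      have h0 : (⁅(⟨x, hx⟩ : I), (⟨y, hy⟩ : I)⁆ : I) = 0 := hI.trivial _ _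
      exact congrArg Subtype.val h0
    -- coordinate 0 of any element of I vanishes
    have c0 : ∀ v ∈ I, b.repr v 0 = 0 := by
      intro v hv
      by_contra hne
      have hw : ⁅b 3, v⁆ ∈ I := I.lie_mem hv
      have hvw := ab v ⁅b 3, v⁆ hv hw
      -- ⁅b 3, v⁆ = -(2 v₀) • b 3
      have hb3v : ⁅b 3, v⁆ = (-(2 * b.repr v 0)) • b 3 := by
        rw [← lie_skew, vb3 v, neg_smul]
      rw [hb3v, lie_smul, vb3 v, smul_smul] at hvw
      have hb3 : b 3 ≠ 0 := b.ne_zero 3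
      rcases smul_eq_zero.mp hvw with h | h
      · rw [neg_mul, neg_eq_zero] at h
        exact hne (by simpa using mul_self_eq_zero.mp h)
      · exact hb3 h
    -- coordinates 1 and 2 vanish
    have c12 : ∀ v ∈ I, b.repr v 1 = 0 ∧ b.repr v 2 = 0 := by
      intro v hv
      have hw : ⁅b 0, v⁆ ∈ I := I.lie_mem hv
      have hvw := ab v ⁅b 0, v⁆ hv hw
      have e3 := rc3 v ⁅b 0, v⁆
      rw [hvw] at e3
      simp only [map_zero, Finsupp.coe_zero, Pi.zero_apply] at e3
      have w0 : b.repr ⁅b 0, v⁆ 0 = 0 := rc0 (b 0) v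
      have w1 : b.repr ⁅b 0, v⁆ 1 = b.repr v 1 + b.repr v 2 := by
        rw [rc1 (b 0) v]; simp [Basis.repr_self_apply]
      have w2 : b.repr ⁅b 0, v⁆ 2 = -(b.repr v 1) + b.repr v 2 := by
        rw [rc2 (b 0) v]; simp [Basis.repr_self_apply]
      have v0 : b.repr v 0 = 0 := c0 v hv
      rw [w0, w1, w2, v0] at e3
      simp only [zero_mul, mul_zero, sub_zero, zero_sub, mul_neg, neg_zero, zero_add] at e3
      constructor
      · nlinarith [sq_nonneg (b.repr v 1), sq_nonneg (b.repr v 2), e3]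
      · nlinarith [sq_nonneg (b.repr v 1), sq_nonneg (b.repr v 2), e3]
    -- injection into ℝ
    let f : I.toSubmodule →ₗ[ℝ] ℝ := (b.coord 3).comp I.toSubmodule.subtype
    have hinj : Function.Injective f := by
      rw [← LinearMap.ker_eq_bot, LinearMap.ker_eq_bot']
      intro m hm
      have h3 : b.repr (m : L) 3 = 0 := hm
      obtain ⟨h1, h2⟩ := c12 (m : L) m.2
      exact Subtype.ext (eqz (m : L) (c0 (m : L) m.2) h1 h2 h3)
    calc finrank ℝ I = finrank ℝ I.toSubmodule := rfl
      _ ≤ finrank ℝ ℝ := LinearMap.finrank_le_finrank_of_injective hinj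
      _ = 1 := finrank_self ℝ
  -- the abelian subalgebra span {b 1, b 3}
  have hA0 : ∃ A : LieSubalgebra ℝ L, IsLieAbelian A ∧ finrank ℝ A = 2 := by
    have hbrket : ∀ x y : L, x ∈ Submodule.span ℝ {b 1, b 3} →
        y ∈ Submodule.span ℝ {b 1, b 3} → ⁅x, y⁆ = 0 := by
      intro x y hx hy
      obtain ⟨s, t, rfl⟩ := Submodule.mem_span_pair.mp hx
      obtain ⟨s', t', rfl⟩ := Submodule.mem_span_pair.mp hy
      simp [lie_add, add_lie, lie_smul, smul_lie, lie_self, h24, h42]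
    refine ⟨{ Submodule.span ℝ {b 1, b 3} with
              lie_mem' := fun hx hy => by
                rw [hbrket _ _ hx hy]; exact Submodule.zero_mem _ }, ?_, ?_⟩
    · constructor
      intro x y
      apply Subtype.ext
      simpa [LieSubalgebra.coe_bracket] using hbrket x.1 y.1 x.2 y.2
    · have hli : LinearIndependent ℝ ![b 1, b 3] := by
        have h : ![b 1, b 3] = b ∘ ![1, 3] := by
          funext i; fin_cases i <;> rfl
        rw [h]
        exact b.linearIndependent.comp ![1, 3] (by decide)
      have hr : Set.range ![b 1, b 3] = {b 1, b 3} := by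
        rw [Set.pair_comm (b 1) (b 3)]
        simp [Matrix.range_cons, Matrix.range_empty]
      have := finrank_span_eq_card hli
      rw [hr, Fintype.card_fin] at this
      exact this
  -- the abelian ideal span {b 3}
  have hI0 : ∃ I : LieIdeal ℝ L, IsLieAbelian I ∧ finrank ℝ I = 1 := by
    have hmem : ∀ (x m : L), m ∈ Submodule.span ℝ {b 3} →
        ⁅x, m⁆ ∈ Submodule.span ℝ {b 3} := by
      intro x m hm
      obtain ⟨t, rfl⟩ := Submodule.mem_span_singleton.mp hm
      rw [lie_smul, vb3 x]
      exact Submodule.smul_mem _ _ (Submodule.smul_mem _ _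
        (Submodule.mem_span_singleton_self _))
    refine ⟨{ Submodule.span ℝ {b 3} with lie_mem := fun hm => hmem _ _ hm }, ?_, ?_⟩
    · constructor
      intro x y
      apply Subtype.ext
      obtain ⟨s, hs⟩ := Submodule.mem_span_singleton.mp x.2
      obtain ⟨t, ht⟩ := Submodule.mem_span_singleton.mp y.2
      have : ⁅(x : L), (y : L)⁆ = 0 := by
        rw [← hs, ← ht]; simp [lie_smul, smul_lie, lie_self]
      simpa using this
    · exact finrank_span_singleton (b.ne_zero 3)
  -- put everything together
  obtain ⟨A0, hA0ab, hA0rk⟩ := hA0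
  obtain ⟨I0, hI0ab, hI0rk⟩ := hI0
  have ha_mem : 2 ∈ {n | ∃ a : LieSubalgebra ℝ L, IsLieAbelian a ∧ finrank ℝ a = n} :=
    ⟨A0, hA0ab, hA0rk⟩
  have ha_ub : ∀ n ∈ {n | ∃ a : LieSubalgebra ℝ L, IsLieAbelian a ∧ finrank ℝ a = n},
      n ≤ 2 := by
    rintro n ⟨A, hab, rfl⟩
    exact alpha_le A hab
  have hb_mem : 1 ∈ {n | ∃ I : LieIdeal ℝ L, IsLieAbelian I ∧ finrank ℝ I = n} :=
    ⟨I0, hI0ab, hI0rk⟩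
  have hb_ub : ∀ n ∈ {n | ∃ I : LieIdeal ℝ L, IsLieAbelian I ∧ finrank ℝ I = n},
      n ≤ 1 := by
    rintro n ⟨I, hab, rfl⟩
    exact beta_le I hab
  constructor
  · exact le_antisymm (csSup_le ⟨2, ha_mem⟩ ha_ub) (le_csSup ⟨2, ha_ub⟩ ha_mem)
  · exact le_antisymm (csSup_le ⟨1, hb_mem⟩ hb_ub) (le_csSup ⟨1, hb_ub⟩ hb_mem)
end

section
/- Let g be a nonzero complex nilpotent Lie algebra of dimension n that is not abelian. Then α(g) ≤ n − 1 and (√(8n+1) − 1)/2 ≤ α(g). -/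
open Module

section Aux

variable {K : Type*} [Field K] {L : Type*} [LieRing L] [LieAlgebra K L]

lemma top_abelian_transfer (h : ∀ x y : L, ⁅x, y⁆ = (0 : L)) : IsLieAbelian L :=
  ⟨h⟩

lemma nilpotent_of_lieSubmodule {V : Type*} [AddCommGroup V] [Module K V]
    [LieRingModule L V] [LieModule K L V] [LieModule.IsNilpotent L V]
    (N : LieSubmodule K L V) : LieModule.IsNilpotent L N := by
  rw [LieSubmodule.isNilpotent_iff_exists_self_le_ucs]
  obtain ⟨k, hk⟩ := (LieModule.isNilpotent_iff_exists_ucs_eq_top K).mp ‹_›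
  exact ⟨k, hk ▸ le_top⟩

private lemma key_arith (rf rg rθ w q m : ℕ) (hA : 2 * rg + w ≤ w * w)
    (hB : rf ≤ rg + rθ) (hC : rθ ≤ q * w) (hD : m = w + q) (hE : 1 ≤ q) :
    2 * rf + m ≤ m * m := by
  subst hD; nlinarith

set_option maxHeartbeats 1000000 in
theorem aux_rank_bound [Module.Finite K L] (m : ℕ) :
    ∀ (V : Type*) [AddCommGroup V] [Module K V] [LieRingModule L V] [LieModule K L V]
      [FiniteDimensional K V] [LieModule.IsNilpotent L V], finrank K V = m →
      2 * finrank K (LinearMap.range ((LieModule.toEnd K L V) : L →ₗ[K] Module.End K V)) + m ≤ m * m := by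
  induction m using Nat.strong_induction_on with
  | _ m IH =>
  intro V _ _ _ _ _ _ hm
  rcases Nat.eq_zero_or_pos m with h0 | hpos
  · subst h0
    have : Subsingleton V := finrank_zero_iff.mp hm
    have : Subsingleton (Module.End K V) := inferInstance
    have : finrank K (LinearMap.range ((LieModule.toEnd K L V) : L →ₗ[K] Module.End K V)) = 0 := by
      have h := Submodule.finrank_le (LinearMap.range ((LieModule.toEnd K L V) : L →ₗ[K] Module.End K V))
      simpa [finrank_zero_of_subsingleton] using h
    simp [this]
  -- main case
  have hVnt : Nontrivial V := by
    rw [← hm] at hpos; exact finrank_pos_iff.mp hpos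
  set W : LieSubmodule K L V := LieModule.lowerCentralSeries K L V 1 with hWdef
  have hmem : ∀ (x : L) (v : V), ⁅x, v⁆ ∈ W := by
    intro x v
    have h : W = ⁅(⊤ : LieIdeal K L), (⊤ : LieSubmodule K L V)⁆ := by
      rw [hWdef, show (1:ℕ) = 0 + 1 from rfl, LieModule.lowerCentralSeries_succ,
        LieModule.lowerCentralSeries_zero]
    rw [h]
    exact LieSubmodule.lie_mem_lie (LieSubmodule.mem_top x) (LieSubmodule.mem_top v)
  have hWne : W ≠ ⊤ := by
    intro htop
    have hall : ∀ k, LieModule.lowerCentralSeries K L V k = ⊤ := by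
      intro k
      induction k with
      | zero => simp
      | succ k ih =>
        rw [LieModule.lowerCentralSeries_succ, ih]
        rw [hWdef, show (1:ℕ) = 0 + 1 from rfl, LieModule.lowerCentralSeries_succ,
          LieModule.lowerCentralSeries_zero] at htop
        exact htop
    obtain ⟨k, hk⟩ := LieModule.IsNilpotent.nilpotent K L V
    rw [hall k] at hk
    obtain ⟨v, v', hvv⟩ := hVnt
    apply hvv
    have h1 : v ∈ (⊥ : LieSubmodule K L V) := hk ▸ LieSubmodule.mem_top v
    have h2 : v' ∈ (⊥ : LieSubmodule K L V) := hk ▸ LieSubmodule.mem_top v'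
    rw [LieSubmodule.mem_bot] at h1 h2
    rw [h1, h2]
  have hWlt : W.toSubmodule < ⊤ := by
    rw [lt_top_iff_ne_top]
    intro h
    apply hWne
    rw [← LieSubmodule.toSubmodule_inj, h, LieSubmodule.top_toSubmodule]
  have hw : finrank K W < m := by
    rw [← hm]
    exact Submodule.finrank_lt hWlt.ne
  have hWnil : LieModule.IsNilpotent L W := nilpotent_of_lieSubmodule W
  set f : L →ₗ[K] Module.End K V := ((LieModule.toEnd K L V) : L →ₗ[K] Module.End K V) with hfdef
  set g : L →ₗ[K] Module.End K W := ((LieModule.toEnd K L W) : L →ₗ[K] Module.End K W) with hgdef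
  have hIH := IH (finrank K W) hw W rfl
  -- kernel inclusion
  have hker_le : LinearMap.ker f ≤ LinearMap.ker g := by
    intro x hx
    rw [LinearMap.mem_ker] at hx ⊢
    ext w
    have h0 : ⁅x, (w : V)⁆ = 0 := by
      have := LinearMap.congr_fun hx (w : V)
      simpa [hfdef, LieModule.toEnd_apply_apply] using this
    have : (⁅x, w⁆ : W) = 0 := by
      apply Subtype.ext
      simpa using h0
    exact congrArg Subtype.val this
  -- complement
  obtain ⟨U, hU⟩ := Submodule.exists_isCompl W.toSubmodule
  -- the auxiliary map
  set θ : LinearMap.ker g →ₗ[K] (U →ₗ[K] W.toSubmodule) :=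
    { toFun := fun x => LinearMap.codRestrict W.toSubmodule
        ((LieModule.toEnd K L V x.1).comp U.subtype) (fun u => hmem x.1 u)
      map_add' := by
        intro x y
        ext u
        simp [LieModule.toEnd_apply_apply, add_lie]
        rfl
      map_smul' := by
        intro c x
        ext u
        simp [LieModule.toEnd_apply_apply, smul_lie]
        rfl } with hθdef
  have hkerθ : ∀ x : LinearMap.ker g, θ x = 0 → x.1 ∈ LinearMap.ker f := by
    intro x hx
    rw [LinearMap.mem_ker]
    ext v
    have hv : v ∈ W.toSubmodule ⊔ U := by rw [hU.sup_eq_top]; exact Submodule.mem_top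
    obtain ⟨w, hwW, u, huU, rfl⟩ := Submodule.mem_sup.mp hv
    have h1 : ⁅x.1, w⁆ = 0 := by
      have hxg := x.2
      rw [LinearMap.mem_ker] at hxg
      have h := LinearMap.congr_fun hxg (⟨w, hwW⟩ : W)
      exact congrArg Subtype.val h
    have h2 : ⁅x.1, u⁆ = 0 := by
      exact congrArg Subtype.val (LinearMap.congr_fun hx (⟨u, huU⟩ : U))
    simp [hfdef, LieModule.toEnd_apply_apply, lie_add, h1, h2]
  -- rank accounting
  have h1 : finrank K (LinearMap.range f) + finrank K (LinearMap.ker f) = finrank K L :=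
    LinearMap.finrank_range_add_finrank_ker f
  have h2 : finrank K (LinearMap.range g) + finrank K (LinearMap.ker g) = finrank K L :=
    LinearMap.finrank_range_add_finrank_ker g
  have h3 : finrank K (LinearMap.range θ) + finrank K (LinearMap.ker θ)
      = finrank K (LinearMap.ker g) := LinearMap.finrank_range_add_finrank_ker θ
  have h4 : finrank K (LinearMap.ker θ) ≤ finrank K (LinearMap.ker f) := by
    have hle : LinearMap.ker θ ≤ (LinearMap.ker f).comap (LinearMap.ker g).subtype := by
      intro x hx
      rw [Submodule.mem_comap]
      exact hkerθ x hx
    have e : ((LinearMap.ker f).comap (LinearMap.ker g).subtype) ≃ₗ[K] LinearMap.ker f :=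
      Submodule.comapSubtypeEquivOfLe hker_le
    calc finrank K (LinearMap.ker θ)
        ≤ finrank K ((LinearMap.ker f).comap (LinearMap.ker g).subtype) :=
          Submodule.finrank_mono hle
      _ = finrank K (LinearMap.ker f) := e.finrank_eq
  have hWW : finrank K W.toSubmodule = finrank K W := rfl
  have h5 : finrank K (LinearMap.range θ) ≤ (m - finrank K W) * finrank K W := by
    have hUW := Submodule.finrank_add_eq_of_isCompl hU
    rw [hm] at hUW
    have hU' : finrank K U = m - finrank K W := by rw [hWW] at hUW; omega
    calc finrank K (LinearMap.range θ) ≤ finrank K (U →ₗ[K] W.toSubmodule) :=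
          Submodule.finrank_le _
      _ = finrank K U * finrank K W.toSubmodule := by rw [Module.finrank_linearMap]
      _ = (m - finrank K W) * finrank K W := by rw [hWW, hU']
  have hIH' : 2 * finrank K (LinearMap.range g) + finrank K W
      ≤ finrank K W * finrank K W := hIH
  have hrf : finrank K (LinearMap.range f) ≤ finrank K (LinearMap.range g)
      + finrank K (LinearMap.range θ) := by omega
  obtain ⟨q, hq, hq1⟩ : ∃ q, m = finrank K W + q ∧ 1 ≤ q :=
    ⟨m - finrank K W, by omega, by omega⟩
  have h5' : finrank K (LinearMap.range θ) ≤ q * finrank K W := by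
    rw [hq] at h5; simpa using h5
  exact key_arith _ _ _ _ _ _ hIH' hrf h5' hq hq1

end Aux

theorem stmt_10' (L : Type*) [LieRing L] [LieAlgebra ℂ L] [FiniteDimensional ℂ L]
    [Nontrivial L] [LieRing.IsNilpotent L] (hna : ¬ IsLieAbelian L)
    (n : ℕ) (hn : finrank ℂ L = n)
    (hmain : ∃ m : ℕ, m ∈ {k | ∃ a : LieSubalgebra ℂ L, IsLieAbelian a ∧ finrank ℂ a = k}
      ∧ 2 * n ≤ m * m + m) :
    alphaInv ℂ L ≤ n - 1 ∧
      (Real.sqrt (8 * n + 1) - 1) / 2 ≤ (alphaInv ℂ L : ℝ) := by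
  have hn1 : 1 ≤ n := by
    rw [← hn]
    exact finrank_pos
  set S := {k | ∃ a : LieSubalgebra ℂ L, IsLieAbelian a ∧ finrank ℂ a = k} with hS
  have hSbdd : ∀ k ∈ S, k ≤ n := by
    rintro k ⟨a, _, rfl⟩
    rw [← hn]
    exact Submodule.finrank_le a.toSubmodule
  constructor
  · apply csSup_le'
    rintro k ⟨a, hab, rfl⟩
    by_contra hcon
    push_neg at hcon
    have hle : finrank ℂ a ≤ n := hSbdd _ ⟨a, hab, rfl⟩
    have heq : finrank ℂ a = n := by omega
    have htop : a.toSubmodule = ⊤ := Submodule.eq_top_of_finrank_eq (by rw [show finrank ℂ a.toSubmodule = finrank ℂ a from rfl, heq, hn])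
    apply hna
    apply top_abelian_transfer
    intro x y
    have hx : x ∈ a := by
      rw [← LieSubalgebra.mem_toSubmodule, htop]; trivial
    have hy : y ∈ a := by
      rw [← LieSubalgebra.mem_toSubmodule, htop]; trivial
    have h := hab.trivial ⟨x, hx⟩ ⟨y, hy⟩
    have h' := congrArg Subtype.val h
    rw [LieSubalgebra.coe_bracket] at h'
    simpa using h'
  · obtain ⟨m, hmS, hmn⟩ := hmain
    have hmα : m ≤ alphaInv ℂ L := le_csSup ⟨n, fun k hk => hSbdd k hk⟩ hmS
    set α := alphaInv ℂ L with hα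
    have h2 : 2 * n ≤ α * α + α := by
      calc 2 * n ≤ m * m + m := hmn
        _ ≤ α * α + α := by exact Nat.add_le_add (Nat.mul_le_mul hmα hmα) hmα
    have hcast : (2 * n : ℝ) ≤ (α : ℝ) * α + α := by
      exact_mod_cast h2
    have h8 : (8 * n + 1 : ℝ) ≤ (2 * (α : ℝ) + 1) ^ 2 := by nlinarith
    have hsq : Real.sqrt (8 * n + 1) ≤ 2 * (α : ℝ) + 1 := by
      have := Real.sqrt_le_sqrt h8
      rwa [Real.sqrt_sq (by positivity)] at this
    linarith

set_option synthInstance.maxHeartbeats 400000 in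
set_option maxHeartbeats 1000000 in
/-- Bounds on α for a nonzero non-abelian complex nilpotent Lie algebra of dimension n. -/
theorem stmt_10 (L : Type*) [LieRing L] [LieAlgebra ℂ L] [FiniteDimensional ℂ L]
    [Nontrivial L] [LieRing.IsNilpotent L] (hna : ¬ IsLieAbelian L)
    (n : ℕ) (hn : finrank ℂ L = n) :
    alphaInv ℂ L ≤ n - 1 ∧
      (Real.sqrt (8 * n + 1) - 1) / 2 ≤ (alphaInv ℂ L : ℝ) := by
  apply stmt_10' L hna n hn
  classical
  set T := {k | ∃ I : LieIdeal ℂ L, IsLieAbelian I ∧ finrank ℂ I = k} with hT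
  have hTbdd : BddAbove T := by
    refine ⟨n, ?_⟩
    rintro k ⟨I, _, rfl⟩
    rw [← hn]
    exact Submodule.finrank_le I.toSubmodule
  have hTne : T.Nonempty := by
    have hss : Subsingleton (⊥ : LieIdeal ℂ L) := by
      constructor
      intro x y
      apply Subtype.ext
      have hx := x.2; have hy := y.2
      rw [LieSubmodule.mem_bot] at hx hy
      rw [hx, hy]
    exact ⟨0, ⊥, ⟨fun x y => Subsingleton.elim _ _⟩, finrank_zero_of_subsingleton⟩
  set m := sSup T with hm
  obtain ⟨a, haab, ham⟩ : m ∈ T := Nat.sSup_mem hTne hTbdd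
  have hmax : ∀ b : LieIdeal ℂ L, IsLieAbelian b → finrank ℂ b ≤ m :=
    fun b hb => le_csSup hTbdd ⟨b, hb, rfl⟩
  have haab' : ∀ x ∈ a, ∀ y ∈ a, ⁅x, y⁆ = (0 : L) := by
    intro x hx y hy
    have h := haab.trivial ⟨x, hx⟩ ⟨y, hy⟩
    exact congrArg Subtype.val h
  -- the centralizer of `a`
  set CS : Submodule ℂ L :=
    { carrier := {x : L | ∀ y ∈ a, ⁅x, y⁆ = 0}
      add_mem' := by
        intro p q hp hq y hy
        rw [add_lie, hp y hy, hq y hy, add_zero]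
      zero_mem' := by
        intro y hy
        rw [zero_lie]
      smul_mem' := by
        intro t p hp y hy
        rw [smul_lie, hp y hy, smul_zero] } with hCS
  set C : LieIdeal ℂ L :=
    { toSubmodule := CS
      lie_mem := by
        intro z p hp y hy
        have hp' : ∀ y ∈ a, ⁅p, y⁆ = (0 : L) := hp
        rw [lie_lie, hp' y hy, hp' ⁅z, y⁆ (a.lie_mem hy), lie_zero, sub_zero] } with hC
  have hmemC : ∀ x : L, x ∈ C ↔ ∀ y ∈ a, ⁅x, y⁆ = (0 : L) := fun x => Iff.rfl
  have haC : a ≤ C := by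
    intro x hx
    rw [hmemC]
    intro y hy
    exact haab' x hx y hy
  have hCa : C ≤ a := by
    by_contra hCle
    obtain ⟨c, hcC, hca⟩ := SetLike.not_le_iff_exists.mp hCle
    -- pass to the quotient L ⧸ a
    have hQnil : LieModule.IsNilpotent L (L ⧸ a) := by
      rw [LieModule.isNilpotent_quotient_iff]
      obtain ⟨k, hk⟩ := LieModule.IsNilpotent.nilpotent ℂ L L
      exact ⟨k, hk ▸ bot_le⟩
    set C' : LieSubmodule ℂ L (L ⧸ a) := LieSubmodule.map (LieSubmodule.Quotient.mk' a) C
      with hC'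
    have hC'nil : LieModule.IsNilpotent L C' := nilpotent_of_lieSubmodule C'
    have hC'nt : Nontrivial C' := by
      refine ⟨⟨⟨LieSubmodule.Quotient.mk' a c, ?_⟩, 0, ?_⟩⟩
      · exact (LieSubmodule.mem_map _).mpr ⟨c, hcC, rfl⟩
      · intro h
        apply hca
        have h0 : LieSubmodule.Quotient.mk' a c = 0 := congrArg Subtype.val h
        exact (LieSubmodule.Quotient.mk_eq_zero a).mp h0
    have hmt := LieModule.nontrivial_max_triv_of_isNilpotent ℂ L C'
    obtain ⟨ξ, hξ0⟩ := exists_ne (0 : LieModule.maxTrivSubmodule ℂ L C')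
    obtain ⟨x, hxC, hxeq⟩ := (LieSubmodule.mem_map _).mp ξ.1.2
    have hxa : x ∉ a := by
      intro hxa
      apply hξ0
      apply Subtype.ext
      apply Subtype.ext
      show (ξ.1.1 : L ⧸ a) = 0
      rw [← hxeq]
      exact (LieSubmodule.Quotient.mk_eq_zero a).mpr hxa
    have hbr : ∀ y : L, ⁅y, x⁆ ∈ a := by
      intro y
      have h1 : ⁅y, ξ.1⁆ = 0 := (LieModule.mem_maxTrivSubmodule ℂ L C' ξ.1).mp ξ.2 y
      have h2 : ⁅y, (ξ.1 : L ⧸ a)⁆ = 0 := by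
        have := congrArg Subtype.val h1
        simpa using this
      rw [← hxeq] at h2
      have h3 : LieSubmodule.Quotient.mk' a ⁅y, x⁆ = 0 := by
        rw [← h2]
        exact (LieSubmodule.Quotient.mk' a).map_lie y x
      exact (LieSubmodule.Quotient.mk_eq_zero a).mp h3
    -- the centralizer of `a` meets the quotient-center: enlarge `a`
    have hxCmem : ∀ y ∈ a, ⁅x, y⁆ = (0 : L) := (hmemC x).mp hxC
    set bS : Submodule ℂ L := a.toSubmodule ⊔ ℂ ∙ x with hbS
    have hmem_bS : ∀ w ∈ bS, ∃ p ∈ a, ∃ t : ℂ, w = p + t • x := by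
      intro w hw
      obtain ⟨p, hp, q, hq, rfl⟩ := Submodule.mem_sup.mp hw
      obtain ⟨t, rfl⟩ := Submodule.mem_span_singleton.mp hq
      exact ⟨p, (LieSubmodule.mem_toSubmodule _).mp hp, t, rfl⟩
    set b : LieIdeal ℂ L :=
      { toSubmodule := bS
        lie_mem := by
          intro z w hw
          obtain ⟨p, hp, t, rfl⟩ := hmem_bS w hw
          have h1 : ⁅z, p + t • x⁆ = ⁅z, p⁆ + t • ⁅z, x⁆ := by
            rw [lie_add, lie_smul]
          rw [h1]
          apply Submodule.mem_sup_left
          apply (LieSubmodule.mem_toSubmodule _).mpr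
          exact a.add_mem (a.lie_mem hp) (a.smul_mem t (hbr z)) } with hb
    have hbab : IsLieAbelian b := by
      constructor
      intro u v
      apply Subtype.ext
      obtain ⟨p, hp, s, hu⟩ := hmem_bS u.1 u.2
      obtain ⟨p', hp', t, hv⟩ := hmem_bS v.1 v.2
      show ⁅(u : L), (v : L)⁆ = (0 : L)
      rw [hu, hv]
      have e1 : ⁅p, p'⁆ = (0 : L) := haab' p hp p' hp'
      have e2 : ⁅x, p'⁆ = (0 : L) := hxCmem p' hp'
      have e3 : ⁅p, x⁆ = (0 : L) := by
        rw [← lie_skew, hxCmem p hp, neg_zero]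
      simp [lie_add, add_lie, lie_smul, smul_lie, e1, e2, e3]
    have hlt : a.toSubmodule < bS := by
      refine lt_of_le_of_ne le_sup_left ?_
      intro hEq
      apply hxa
      have : x ∈ bS := Submodule.mem_sup_right (Submodule.mem_span_singleton_self x)
      rw [← hEq] at this
      exact (LieSubmodule.mem_toSubmodule _).mp this
    have : m < finrank ℂ b := by
      rw [← ham]
      exact Submodule.finrank_lt_finrank_of_lt hlt
    have := hmax b hbab
    omega
  -- now apply the key rank bound with `V = a`
  have hnil : LieModule.IsNilpotent L a := nilpotent_of_lieSubmodule a
  set f : L →ₗ[ℂ] Module.End ℂ a := ((LieModule.toEnd ℂ L a) : L →ₗ[ℂ] Module.End ℂ a) with hf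
  have hker : LinearMap.ker f = a.toSubmodule := by
    ext z
    rw [LinearMap.mem_ker]
    constructor
    · intro hz
      have hzC : z ∈ C := by
        rw [hmemC]
        intro y hy
        have := LinearMap.congr_fun hz ⟨y, hy⟩
        exact congrArg Subtype.val this
      exact (LieSubmodule.mem_toSubmodule _).mpr (hCa hzC)
    · intro hz
      ext w
      simp only [LinearMap.zero_apply, ZeroMemClass.coe_zero]
      show ⁅z, (w : L)⁆ = (0 : L)
      exact haab' z ((LieSubmodule.mem_toSubmodule _).mp hz) w.1 w.2
  have hbound := aux_rank_bound (K := ℂ) (L := L) (finrank ℂ a) a rfl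
  have hrn : finrank ℂ (LinearMap.range f) + finrank ℂ (LinearMap.ker f) = finrank ℂ L :=
    LinearMap.finrank_range_add_finrank_ker f
  have hkm : finrank ℂ (LinearMap.ker f) = m := by
    rw [hker, ← ham]
    rfl
  refine ⟨m, ⟨(a : LieSubalgebra ℂ L), ?_, ?_⟩, ?_⟩
  · constructor
    intro u v
    apply Subtype.ext
    rw [LieSubalgebra.coe_bracket]
    exact haab' u.1 u.2 v.1 v.2
  · exact ham
  · rw [hn] at hrn
    rw [ham] at hbound
    have hbound' : 2 * finrank ℂ (LinearMap.range f) + m ≤ m * m := hbound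
    omega
end

section
/- Let g be a complex nilpotent Lie algebra of dimension n with α(g) = n−2. Then β(g) = n−2, i.e., g possesses an abelian ideal of codimension 2. -/
open Module

open LieAlgebra Submodule

section Aux
variable {L : Type*} [LieRing L] [LieAlgebra ℂ L] [FiniteDimensional ℂ L]

lemma aux_engel [LieRing.IsNilpotent L] (A : LieSubalgebra ℂ L) (h : A ≠ ⊤) :
    ∃ z, z ∈ A.normalizer ∧ z ∉ A := by
  classical
  obtain ⟨k, hk⟩ :=
    LieModule.IsNilpotent.nilpotent ℂ L L
  have hex : ∃ i, ∀ v ∈ LieModule.lowerCentralSeries ℂ L L i, v ∈ A := by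
    refine ⟨k, ?_⟩
    rw [hk]
    intro v hv
    have : v = 0 := by simpa using hv
    simp [this]
  have hi : ∀ v ∈ LieModule.lowerCentralSeries ℂ L L (Nat.find hex), v ∈ A := Nat.find_spec hex
  have hi0 : Nat.find hex ≠ 0 := by
    intro h0
    apply h
    ext v
    simp only [LieSubalgebra.mem_top, iff_true]
    exact hi v (by rw [h0]; simp)
  obtain ⟨j, hj⟩ : ∃ j, Nat.find hex = j + 1 := ⟨Nat.find hex - 1, by omega⟩
  have hjlt := Nat.find_min hex (m := j) (by omega)
  push_neg at hjlt
  obtain ⟨z, hz1, hz2⟩ := hjlt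
  refine ⟨z, ?_, hz2⟩
  rw [A.mem_normalizer_iff]
  intro y hy
  have h1 : ⁅y, z⁆ ∈ LieModule.lowerCentralSeries ℂ L L (j + 1) := by
    rw [LieModule.lowerCentralSeries_succ]
    exact LieSubmodule.lie_mem_lie (LieSubmodule.mem_top _) hz1
  have h2 : ⁅z, y⁆ ∈ LieModule.lowerCentralSeries ℂ L L (j + 1) := by
    rw [← lie_skew]; exact neg_mem h1
  exact hi _ (hj ▸ h2)

lemma aux_ab (A : LieSubalgebra ℂ L) (hA : IsLieAbelian A) :
    ∀ a ∈ A, ∀ b ∈ A, ⁅a, b⁆ = (0 : L) := by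
  intro a ha b hb
  have := hA.trivial ⟨a, ha⟩ ⟨b, hb⟩
  exact congrArg Subtype.val this

lemma aux_ext (A : LieSubalgebra ℂ L) (hA : IsLieAbelian A) {z : L} (hz : z ∉ A)
    (hc : ∀ a ∈ A, ⁅z, a⁆ = 0) :
    ∃ B : LieSubalgebra ℂ L, IsLieAbelian B ∧ finrank ℂ B = finrank ℂ A + 1 := by
  have habA := aux_ab A hA
  set S := A.toSubmodule ⊔ span ℂ {z} with hS
  have hmem : ∀ u ∈ S, ∃ c : ℂ, ∃ a ∈ A, u = a + c • z := by
    intro u hu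
    rw [hS, mem_sup] at hu
    obtain ⟨a, ha, s, hs, rfl⟩ := hu
    obtain ⟨c, rfl⟩ := mem_span_singleton.mp hs
    exact ⟨c, a, ha, rfl⟩
  have hzero : ∀ u ∈ S, ∀ v ∈ S, ⁅u, v⁆ = (0 : L) := by
    intro u hu v hv
    obtain ⟨c, a, ha, rfl⟩ := hmem u hu
    obtain ⟨c', a', ha', rfl⟩ := hmem v hv
    have h1 : ⁅a, z⁆ = (0 : L) := by rw [← lie_skew, hc a ha, neg_zero]
    simp [lie_add, add_lie, lie_smul, smul_lie, habA a ha a' ha', h1, hc a' ha']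
  refine ⟨{ toSubmodule := S, lie_mem' := ?_ }, ?_, ?_⟩
  · intro x y hx hy
    have : ⁅x, y⁆ = (0 : L) := hzero x hx y hy
    rw [this]; exact S.zero_mem
  · constructor
    intro u v
    apply Subtype.ext
    exact hzero u u.2 v v.2
  · have hzne : z ≠ 0 := fun h => hz (h ▸ A.zero_mem)
    have hinf : A.toSubmodule ⊓ span ℂ {z} = ⊥ := by
      rw [eq_bot_iff]
      rintro v hv
      rw [mem_inf] at hv
      obtain ⟨hv1, hv2⟩ := hv
      obtain ⟨c, rfl⟩ := mem_span_singleton.mp hv2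
      rcases eq_or_ne c 0 with rfl | hcne
      · simp
      · exact absurd (by simpa using A.toSubmodule.smul_mem c⁻¹ hv1 : c⁻¹ • c • z ∈ A.toSubmodule)
          (by rwa [inv_smul_smul₀ hcne])
    have h2 := Submodule.finrank_sup_add_finrank_inf_eq A.toSubmodule (span ℂ {z})
    rw [hinf, finrank_bot, finrank_span_singleton hzne, ← hS] at h2
    show finrank ℂ S = finrank ℂ A + 1
    have hAA : finrank ℂ A = finrank ℂ A.toSubmodule := rfl
    omega

lemma aux_main [LieRing.IsNilpotent L] (m : ℕ) (hm : 0 < m)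
    (hL : finrank ℂ L = m + 2)
    (A : LieSubalgebra ℂ L) (hA : IsLieAbelian A) (hdim : finrank ℂ A = m)
    (hmax : ∀ B : LieSubalgebra ℂ L, IsLieAbelian B → finrank ℂ B ≤ m) :
    ∃ I : LieIdeal ℂ L, IsLieAbelian I ∧ finrank ℂ I = m := by
  classical
  have habA := aux_ab A hA
  have hAA : finrank ℂ A = finrank ℂ A.toSubmodule := rfl
  have hself : ∀ z : L, (∀ a ∈ A, ⁅z, a⁆ = 0) → z ∈ A := by
    intro z hzc
    by_contra hzA
    obtain ⟨B, hB1, hB2⟩ := aux_ext A hA hzA hzc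
    have := hmax B hB1
    omega
  have hAne : A ≠ ⊤ := by
    intro h
    rw [h] at hdim
    have : finrank ℂ (⊤ : LieSubalgebra ℂ L) = finrank ℂ L := by
      rw [show finrank ℂ (⊤ : LieSubalgebra ℂ L) = finrank ℂ (⊤ : Submodule ℂ L) from rfl,
        finrank_top]
    omega
  by_cases hNtop : A.normalizer = ⊤
  · have hid : ∀ x : L, ∀ a ∈ A, ⁅x, a⁆ ∈ A := by
      intro x
      exact (A.mem_normalizer_iff x).mp (hNtop ▸ LieSubalgebra.mem_top x)
    refine ⟨{ A.toSubmodule with lie_mem := fun {x y} hy => hid x y hy }, ?_, ?_⟩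
    · constructor
      intro u v
      apply Subtype.ext
      exact habA u u.2 v v.2
    · exact hdim
  · -- main case
    set N := A.normalizer with hNdef
    have hAN : A ≤ N := A.le_normalizer
    have hAidN : ∀ u ∈ N, ∀ a ∈ A, ⁅u, a⁆ ∈ A := fun u hu => (A.mem_normalizer_iff u).mp hu
    obtain ⟨z₀, hz₀N, hz₀A⟩ := aux_engel A hAne
    have hANsub : A.toSubmodule < N.toSubmodule := by
      refine lt_iff_le_not_ge.mpr ⟨fun v hv => hAN hv, fun h' => hz₀A (h' hz₀N)⟩
    have hNne : N.toSubmodule ≠ ⊤ := by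
      intro h
      apply hNtop
      ext v
      simp only [LieSubalgebra.mem_top, iff_true]
      show v ∈ N.toSubmodule
      rw [h]; trivial
    have hNdim : finrank ℂ N.toSubmodule = m + 1 := by
      have h1 := Submodule.finrank_lt_finrank_of_lt hANsub
      have h2 := Submodule.finrank_lt (K := ℂ) (V := L) hNne
      omega
    -- N is an ideal
    have hNid : ∀ z : L, ∀ u ∈ N, ⁅z, u⁆ ∈ N := by
      have hNNtop : N.normalizer = ⊤ := by
        obtain ⟨z₁, hz₁N, hz₁⟩ := aux_engel N (fun h => hNne (by rw [h]; rfl))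
        have hsub : N.toSubmodule < N.normalizer.toSubmodule :=
          lt_iff_le_not_ge.mpr ⟨fun v hv => N.le_normalizer hv, fun h' => hz₁ (h' hz₁N)⟩
        have h1 := Submodule.finrank_lt_finrank_of_lt hsub
        have h2 := Submodule.finrank_le N.normalizer.toSubmodule
        have h3 : finrank ℂ N.normalizer.toSubmodule = m + 2 := by omega
        have h4 : N.normalizer.toSubmodule = ⊤ := Submodule.eq_top_of_finrank_eq (by omega)
        ext v
        simp only [LieSubalgebra.mem_top, iff_true]
        show v ∈ N.normalizer.toSubmodule
        rw [h4]; trivial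
      intro z u hu
      exact (N.mem_normalizer_iff z).mp (hNNtop ▸ LieSubalgebra.mem_top z) u hu
    -- pick x outside N
    obtain ⟨x, hxN⟩ : ∃ x, x ∉ N := by
      by_contra h
      push_neg at h
      exact hNne (eq_top_iff.mpr fun v _ => h v)
    obtain ⟨a₀, ha₀, hxa₀⟩ : ∃ a₀ ∈ A, ⁅x, a₀⁆ ∉ A := by
      by_contra h
      push_neg at h
      exact hxN ((A.mem_normalizer_iff x).mpr h)
    set y₀ : L := ⁅x, a₀⁆ with hy₀def
    have hy₀N : y₀ ∈ N := hNid x a₀ (hAN ha₀)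
    have hy₀A : y₀ ∉ A := hxa₀
    -- N = A ⊕ ⟨y₀⟩
    have hy₀ne : y₀ ≠ 0 := fun h => hy₀A (h ▸ A.zero_mem)
    have hinf : A.toSubmodule ⊓ span ℂ {y₀} = ⊥ := by
      rw [eq_bot_iff]
      rintro v hv
      rw [mem_inf] at hv
      obtain ⟨hv1, hv2⟩ := hv
      obtain ⟨c, rfl⟩ := mem_span_singleton.mp hv2
      rcases eq_or_ne c 0 with rfl | hcne
      · simp
      · exact absurd (by simpa using A.toSubmodule.smul_mem c⁻¹ hv1 : c⁻¹ • c • y₀ ∈ A.toSubmodule)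
          (by rwa [inv_smul_smul₀ hcne])
    have hNsup : A.toSubmodule ⊔ span ℂ {y₀} = N.toSubmodule := by
      apply Submodule.eq_of_le_of_finrank_le
      · refine sup_le (fun v hv => hAN hv) ?_
        rw [span_le, Set.singleton_subset_iff]
        exact hy₀N
      · have h2 := Submodule.finrank_sup_add_finrank_inf_eq A.toSubmodule (span ℂ {y₀})
        rw [hinf, finrank_bot, finrank_span_singleton hy₀ne] at h2
        omega
    have hdec : ∀ u ∈ N, ∃ c : ℂ, ∃ z ∈ A, u = c • y₀ + z := by
      intro u hu
      have : u ∈ A.toSubmodule ⊔ span ℂ {y₀} := by rw [hNsup]; exact hu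
      rw [mem_sup] at this
      obtain ⟨a, ha, s, hs, rfl⟩ := this
      obtain ⟨c, rfl⟩ := mem_span_singleton.mp hs
      exact ⟨c, a, ha, by abel⟩
    have huniq : ∀ c : ℂ, ∀ z ∈ A, c • y₀ + z ∈ A → c = 0 := by
      intro c z hz hcz
      by_contra hcne
      apply hy₀A
      have h1 : c • y₀ ∈ A.toSubmodule := by
        have := A.toSubmodule.sub_mem hcz hz
        simpa using this
      have := A.toSubmodule.smul_mem c⁻¹ h1
      rwa [inv_smul_smul₀ hcne] at this
    set w : L := ⁅y₀, a₀⁆ with hwdef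
    have hwA : w ∈ A := hAidN y₀ hy₀N a₀ ha₀
    -- key relation F3
    have hF3 : ∀ a ∈ A, ∀ c : ℂ, ∀ z ∈ A, ⁅x, a⁆ = c • y₀ + z → ⁅y₀, a⁆ = c • w := by
      intro a ha c z hz hxa
      have hJ := leibniz_lie x a a₀
      rw [habA a ha a₀ ha₀, lie_zero, hxa, add_lie, smul_lie, ← hy₀def, ← hwdef,
        habA z hz a₀ ha₀, add_zero] at hJ
      have h3 : ⁅a, y₀⁆ = -(c • w) := eq_neg_of_add_eq_zero_right hJ.symm
      rw [← lie_skew y₀ a, h3, neg_neg]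
    have hnil : ∀ c : ℂ, ⁅y₀, w⁆ = c • w → w ≠ 0 → c = 0 := by
      intro c hcw hwne
      obtain ⟨k, hk⟩ := LieAlgebra.nilpotent_ad_of_nilpotent_algebra ℂ L
      have hiter : ∀ j : ℕ, (ad ℂ L y₀ ^ j) w = c ^ j • w := by
        intro j
        induction j with
        | zero => simp
        | succ j ih =>
          rw [pow_succ', Module.End.mul_apply, ih, map_smul, ad_apply, hcw, smul_smul, pow_succ]
      have h0 : c ^ k • w = 0 := by
        rw [← hiter k, hk y₀, LinearMap.zero_apply]
      have hck : c ^ k = 0 := by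
        rcases smul_eq_zero.mp h0 with h | h
        · exact h
        · exact absurd h hwne
      by_contra hc
      exact (pow_ne_zero k hc) hck
    have hw0 : w ≠ 0 := by
      intro hw
      apply hy₀A
      apply hself y₀
      intro a ha
      obtain ⟨c, z, hzA', hdecz⟩ := hdec ⁅x, a⁆ (hNid x a (hAN ha))
      rw [hF3 a ha c z hzA' hdecz, hw, smul_zero]
    have hwD : ⁅x, w⁆ ∈ A := by
      obtain ⟨c, z, hzA', hdecz⟩ := hdec ⁅x, w⁆ (hNid x w (hAN hwA))
      have hc0 : c = 0 := hnil c (hF3 w hwA c z hzA' hdecz) hw0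
      rw [hdecz, hc0, zero_smul, zero_add]; exact hzA'
    set D : Submodule ℂ L := A.toSubmodule ⊓ Submodule.comap (ad ℂ L x) A.toSubmodule with hDdef
    have hDmem : ∀ v : L, v ∈ D ↔ v ∈ A ∧ ⁅x, v⁆ ∈ A := by
      intro v
      rw [hDdef, mem_inf, mem_comap, ad_apply]
      exact Iff.rfl
    have hDA : ∀ v ∈ D, v ∈ A := fun v hv => ((hDmem v).mp hv).1
    have hwMemD : w ∈ D := (hDmem w).mpr ⟨hwA, hwD⟩
    have hyD : ∀ d ∈ D, ⁅y₀, d⁆ = 0 := by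
      intro d hd
      obtain ⟨hd1, hd2⟩ := (hDmem d).mp hd
      have := hF3 d hd1 0 ⁅x, d⁆ hd2 (by rw [zero_smul, zero_add])
      rwa [zero_smul] at this
    obtain ⟨γ, ce, hceA, hxy₀⟩ := hdec ⁅x, y₀⁆ (hNid x y₀ hy₀N)
    have hF6 : ∀ d ∈ D, ⁅x, d⁆ ∈ D := by
      intro d hd
      obtain ⟨hd1, hd2⟩ := (hDmem d).mp hd
      rw [hDmem]
      refine ⟨hd2, ?_⟩
      obtain ⟨c', z', hz'A, hdec'⟩ := hdec ⁅x, ⁅x, d⁆⁆ (hNid x _ (hAN hd2))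
      have hy₀xd : ⁅y₀, ⁅x, d⁆⁆ = c' • w := hF3 _ hd2 c' z' hz'A hdec'
      have hJ := leibniz_lie x y₀ d
      rw [hyD d hd, lie_zero, hxy₀, add_lie, smul_lie, hyD d hd, smul_zero, zero_add,
        habA ce hceA d hd1, zero_add, hy₀xd] at hJ
      have hc'0 : c' = 0 := by
        rcases smul_eq_zero.mp hJ.symm with h | h
        · exact h
        · exact absurd h hw0
      rw [hdec', hc'0, zero_smul, zero_add]; exact hz'A
    -- quadratic root
    obtain ⟨κ, zc, hzcA, hxce⟩ := hdec ⁅x, ce⁆ (hNid x ce (hAN hceA))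
    obtain ⟨t, ht⟩ : ∃ t : ℂ, κ - (γ + t) * t = 0 := by
      obtain ⟨s, hs⟩ := IsAlgClosed.exists_pow_nat_eq (k := ℂ) (γ ^ 2 + 4 * κ) (n := 2)
        (by norm_num)
      exact ⟨(s - γ) / 2, by linear_combination -hs / 4⟩
    set y₁ : L := y₀ + t • a₀ with hy₁def
    have hy₁A : y₁ ∉ A := by
      intro h
      apply hy₀A
      have h2 := A.toSubmodule.sub_mem h (A.toSubmodule.smul_mem t ha₀)
      have h3 : y₁ - t • a₀ = y₀ := by rw [hy₁def]; abel
      rwa [h3] at h2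
    have hy₁ne : y₁ ≠ 0 := fun h => hy₁A (h ▸ A.zero_mem)
    set I : Submodule ℂ L := D ⊔ span ℂ {y₁} with hIdef
    have hImem : ∀ v ∈ I, ∃ c : ℂ, ∃ d ∈ D, v = c • y₁ + d := by
      intro v hv
      rw [hIdef, mem_sup] at hv
      obtain ⟨d, hd, s', hs', rfl⟩ := hv
      obtain ⟨c, rfl⟩ := mem_span_singleton.mp hs'
      exact ⟨c, d, hd, by abel⟩
    have hDI : D ≤ I := le_sup_left
    have hy₁I : y₁ ∈ I := Submodule.mem_sup_right (mem_span_singleton_self y₁)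
    have hy₁D : ∀ d ∈ D, ⁅y₁, d⁆ = 0 := by
      intro d hd
      rw [hy₁def, add_lie, hyD d hd, smul_lie, habA a₀ ha₀ d (hDA d hd), smul_zero, add_zero]
    have hND : ∀ u ∈ N, ∀ d ∈ D, ⁅u, d⁆ = 0 := by
      intro u hu d hd
      obtain ⟨cu, a, haA, rfl⟩ := hdec u hu
      rw [add_lie, smul_lie, hyD d hd, smul_zero, zero_add, habA a haA d (hDA d hd)]
    have hNy₁ : ∀ u ∈ N, ⁅u, y₁⁆ ∈ D := by
      intro u hu
      obtain ⟨cu, a, haA, rfl⟩ := hdec u hu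
      obtain ⟨ca, za, hzaA, hdeca⟩ := hdec ⁅x, a⁆ (hNid x a (hAN haA))
      have hy₀a : ⁅y₀, a⁆ = ca • w := hF3 a haA ca za hzaA hdeca
      have hay₀ : ⁅a, y₀⁆ = -(ca • w) := by
        rw [← lie_skew a y₀, hy₀a]
      rw [add_lie, smul_lie]
      refine D.add_mem (D.smul_mem cu ?_) ?_
      · rw [hy₁def, lie_add, lie_self, lie_smul, zero_add]
        exact D.smul_mem t hwMemD
      · rw [hy₁def, lie_add, lie_smul, habA a haA a₀ ha₀, smul_zero, add_zero, hay₀]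
        exact D.neg_mem (D.smul_mem ca hwMemD)
    have hu : ce - ((γ + t) * t) • a₀ ∈ D := by
      rw [hDmem]
      constructor
      · exact A.sub_mem hceA (A.smul_mem _ ha₀)
      · rw [lie_sub, lie_smul, ← hy₀def, hxce]
        have h3 : κ • y₀ + zc - ((γ + t) * t) • y₀ = (κ - (γ + t) * t) • y₀ + zc := by
          module
        rw [h3, ht, zero_smul, zero_add]
        exact hzcA
    have hxy₁I : ⁅x, y₁⁆ ∈ I := by
      have hxy₁ : ⁅x, y₁⁆ = (γ + t) • y₁ + (ce - ((γ + t) * t) • a₀) := by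
        rw [hy₁def, lie_add, lie_smul, hxy₀, ← hy₀def]
        module
      rw [hxy₁]
      exact I.add_mem (I.smul_mem _ hy₁I) (hDI hu)
    have htop : N.toSubmodule ⊔ span ℂ {x} = ⊤ := by
      apply Submodule.eq_top_of_finrank_eq
      have hxne : x ≠ 0 := fun h => hxN (h ▸ N.zero_mem)
      have hinfx : N.toSubmodule ⊓ span ℂ {x} = ⊥ := by
        rw [eq_bot_iff]
        rintro v hv
        rw [mem_inf] at hv
        obtain ⟨hv1, hv2⟩ := hv
        obtain ⟨c, rfl⟩ := mem_span_singleton.mp hv2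
        rcases eq_or_ne c 0 with rfl | hcne
        · simp
        · exact absurd
            (by simpa using N.toSubmodule.smul_mem c⁻¹ hv1 : c⁻¹ • c • x ∈ N.toSubmodule)
            (by rwa [inv_smul_smul₀ hcne])
      have h2 := Submodule.finrank_sup_add_finrank_inf_eq N.toSubmodule (span ℂ {x})
      rw [hinfx, finrank_bot, finrank_span_singleton hxne] at h2
      rw [hL]
      omega
    have hdecL : ∀ v : L, ∃ c : ℂ, ∃ u ∈ N, v = c • x + u := by
      intro v
      have hv : v ∈ N.toSubmodule ⊔ span ℂ {x} := by rw [htop]; trivial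
      rw [mem_sup] at hv
      obtain ⟨u, hu', s', hs', rfl⟩ := hv
      obtain ⟨c, rfl⟩ := mem_span_singleton.mp hs'
      exact ⟨c, u, hu', by abel⟩
    have hlie : ∀ z : L, ∀ v ∈ I, ⁅z, v⁆ ∈ I := by
      intro z v hv
      obtain ⟨c, u, huN, rfl⟩ := hdecL z
      obtain ⟨cv, d, hd, rfl⟩ := hImem v hv
      rw [add_lie, smul_lie, lie_add, lie_add, lie_smul, lie_smul]
      refine I.add_mem (I.smul_mem c (I.add_mem (I.smul_mem cv hxy₁I) (hDI (hF6 d hd))))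
        (I.add_mem (I.smul_mem cv (hDI (hNy₁ u huN))) ?_)
      rw [hND u huN d hd]
      exact I.zero_mem
    have hIab : ∀ v ∈ I, ∀ v' ∈ I, ⁅v, v'⁆ = (0 : L) := by
      intro v hv v' hv'
      obtain ⟨c, d, hd, rfl⟩ := hImem v hv
      obtain ⟨c', d', hd', rfl⟩ := hImem v' hv'
      have h1 : ⁅d, y₁⁆ = (0 : L) := by rw [← lie_skew d y₁, hy₁D d hd, neg_zero]
      simp only [add_lie, smul_lie, lie_add, lie_smul, lie_self, hy₁D d' hd', h1,
        habA d (hDA d hd) d' (hDA d' hd'), smul_zero, zero_add, add_zero]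
    -- dimension of D
    have hDle : D ≤ A.toSubmodule := by rw [hDdef]; exact inf_le_left
    have hDrank : finrank ℂ D + 1 = m := by
      set f : ↥A.toSubmodule →ₗ[ℂ] L ⧸ A.toSubmodule :=
        A.toSubmodule.mkQ.comp ((ad ℂ L x).comp A.toSubmodule.subtype) with hfdef
      have hfapp : ∀ a : ↥A.toSubmodule, f a = A.toSubmodule.mkQ ⁅x, (a : L)⁆ := fun a => rfl
      have hker : LinearMap.ker f = Submodule.comap A.toSubmodule.subtype D := by
        ext a
        rw [LinearMap.mem_ker, mem_comap, hfapp, Submodule.mkQ_apply,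
          Submodule.Quotient.mk_eq_zero, hDmem]
        exact ⟨fun h => ⟨a.2, h⟩, fun h => h.2⟩
      have hkerD : finrank ℂ (LinearMap.ker f) = finrank ℂ D := by
        rw [hker]
        have h1 := Submodule.finrank_map_subtype_eq A.toSubmodule
          (Submodule.comap A.toSubmodule.subtype D)
        rw [Submodule.map_comap_subtype, inf_eq_right.mpr hDle] at h1
        exact h1.symm
      have hy₀q : A.toSubmodule.mkQ y₀ ≠ 0 := by
        rw [Submodule.mkQ_apply, ne_eq, Submodule.Quotient.mk_eq_zero]
        exact hy₀A
      have hrange : finrank ℂ (LinearMap.range f) = 1 := by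
        have hle : LinearMap.range f ≤ span ℂ {A.toSubmodule.mkQ y₀} := by
          rintro v ⟨a, rfl⟩
          rw [hfapp]
          obtain ⟨c, z, hzA', hdecz⟩ := hdec ⁅x, (a : L)⁆ (hNid x a (hAN a.2))
          rw [hdecz, map_add, map_smul]
          have hz0 : A.toSubmodule.mkQ z = 0 := by
            rw [Submodule.mkQ_apply, Submodule.Quotient.mk_eq_zero]
            exact hzA'
          rw [hz0, add_zero]
          exact Submodule.smul_mem _ c (mem_span_singleton_self _)
        have h1 : finrank ℂ (LinearMap.range f) ≤ 1 := by
          have h2 := Submodule.finrank_mono hle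
          rwa [finrank_span_singleton hy₀q] at h2
        have hne : finrank ℂ (LinearMap.range f) ≠ 0 := by
          intro h0
          have hbot := Submodule.finrank_eq_zero.mp h0
          have hmem0 : A.toSubmodule.mkQ y₀ ∈ LinearMap.range f :=
            ⟨⟨a₀, ha₀⟩, by rw [hfapp, ← hy₀def]⟩
          rw [hbot] at hmem0
          exact hy₀q (by simpa using hmem0)
        omega
      have hrn := LinearMap.finrank_range_add_finrank_ker f
      rw [hrange, hkerD] at hrn
      omega
    have hinfI : D ⊓ span ℂ {y₁} = ⊥ := by
      rw [eq_bot_iff]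
      rintro v hv
      rw [mem_inf] at hv
      obtain ⟨hv1, hv2⟩ := hv
      obtain ⟨c, rfl⟩ := mem_span_singleton.mp hv2
      rcases eq_or_ne c 0 with rfl | hcne
      · simp
      · exfalso
        apply hy₁A
        have h2 := A.toSubmodule.smul_mem c⁻¹ (hDle hv1)
        rwa [inv_smul_smul₀ hcne] at h2
    have hIfin : finrank ℂ I = m := by
      have h2 := Submodule.finrank_sup_add_finrank_inf_eq D (span ℂ {y₁})
      rw [hinfI, finrank_bot, finrank_span_singleton hy₁ne, ← hIdef] at h2
      omega
    refine ⟨{ I with lie_mem := fun {z v} hv => hlie z v hv }, ?_, hIfin⟩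
    constructor
    intro u v
    apply Subtype.ext
    exact hIab u u.2 v v.2
end Aux

/-- A complex nilpotent Lie algebra with α(g) = n-2 satisfies β(g) = n-2. -/
theorem stmt_13 (L : Type*) [LieRing L] [LieAlgebra ℂ L] [FiniteDimensional ℂ L]
    [LieRing.IsNilpotent L] (n : ℕ) (hn : finrank ℂ L = n)
    (halpha : alphaInv ℂ L = n - 2) : betaInv ℂ L = n - 2 := by
  classical
  unfold alphaInv at halpha
  unfold betaInv
  have hbddA : BddAbove {k | ∃ a : LieSubalgebra ℂ L, IsLieAbelian a ∧ finrank ℂ a = k} := by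
    refine ⟨finrank ℂ L, ?_⟩
    rintro k ⟨a, -, rfl⟩
    exact Submodule.finrank_le a.toSubmodule
  have hbddB : BddAbove {k | ∃ I : LieIdeal ℂ L, IsLieAbelian I ∧ finrank ℂ I = k} := by
    refine ⟨finrank ℂ L, ?_⟩
    rintro k ⟨I, -, rfl⟩
    exact Submodule.finrank_le I.toSubmodule
  have hAne : {k | ∃ a : LieSubalgebra ℂ L, IsLieAbelian a ∧ finrank ℂ a = k}.Nonempty := by
    refine ⟨0, ⊥, ⟨fun u v => ?_⟩, ?_⟩
    · apply Subtype.ext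
      have hu : (u : L) = 0 := (LieSubalgebra.mem_bot (u : L)).mp u.2
      show ⁅(u : L), (v : L)⁆ = 0
      rw [hu, zero_lie]
    · show finrank ℂ (⊥ : Submodule ℂ L) = 0
      simp
  have hBne : {k | ∃ I : LieIdeal ℂ L, IsLieAbelian I ∧ finrank ℂ I = k}.Nonempty := by
    refine ⟨0, ⊥, ⟨fun u v => ?_⟩, ?_⟩
    · apply Subtype.ext
      have hu : (u : L) = 0 := (LieSubmodule.mem_bot _).mp u.2
      show ⁅(u : L), (v : L)⁆ = 0
      rw [hu, zero_lie]
    · have h1 : ∀ z : (⊥ : LieIdeal ℂ L), (z : L) = 0 := fun z => (LieSubmodule.mem_bot _).mp z.2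
      have hss : Subsingleton (⊥ : LieIdeal ℂ L) := ⟨fun a b => Subtype.ext (by rw [h1 a, h1 b])⟩
      exact finrank_zero_of_subsingleton
  have hsub : {k | ∃ I : LieIdeal ℂ L, IsLieAbelian I ∧ finrank ℂ I = k} ⊆
      {k | ∃ a : LieSubalgebra ℂ L, IsLieAbelian a ∧ finrank ℂ a = k} := by
    rintro k ⟨I, hab, rfl⟩
    refine ⟨(I : LieSubalgebra ℂ L), ⟨fun u v => ?_⟩, rfl⟩
    · apply Subtype.ext
      have h := hab.trivial ⟨u.1, u.2⟩ ⟨v.1, v.2⟩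
      exact congrArg Subtype.val h
  have hba : sSup {k | ∃ I : LieIdeal ℂ L, IsLieAbelian I ∧ finrank ℂ I = k} ≤
      sSup {k | ∃ a : LieSubalgebra ℂ L, IsLieAbelian a ∧ finrank ℂ a = k} :=
    csSup_le_csSup hbddA hBne hsub
  rcases Nat.eq_zero_or_pos (n - 2) with h0 | hpos
  · rw [h0] at halpha ⊢
    omega
  · have hmemA := Nat.sSup_mem hAne hbddA
    rw [halpha] at hmemA
    obtain ⟨A, hAab, hAdim⟩ := hmemA
    have hmax : ∀ B : LieSubalgebra ℂ L, IsLieAbelian B → finrank ℂ B ≤ n - 2 := by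
      intro B hB
      rw [← halpha]
      exact le_csSup hbddA ⟨B, hB, rfl⟩
    obtain ⟨I, hIab, hIfin⟩ := aux_main (n - 2) hpos (by omega) A hAab hAdim hmax
    have hge : n - 2 ≤ sSup {k | ∃ I : LieIdeal ℂ L, IsLieAbelian I ∧ finrank ℂ I = k} :=
      le_csSup hbddB ⟨I, hIab, hIfin⟩
    omega
end

section
/- Let φ: sl₂(ℂ) → Der(ℂ^ℓ) be a Lie algebra homomorphism and g = sl₂(ℂ) ⋉_φ ℂ^ℓ the corresponding semidirect product, of dimension n = ℓ + 3. If g contains an abelian subalgebra of dimension n−2, then φ = 0. -/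
open Module
attribute [local instance 100] LieRing.ofAssociativeRing

namespace Stmt15Aux

open LieAlgebra.SpecialLinear

private lemma sl2_trace (x : sl (Fin 2) ℂ) : x.val 1 1 = - x.val 0 0 := by
  have h : Matrix.trace x.val = 0 := x.property
  rw [Matrix.trace_fin_two] at h; linear_combination h

private lemma prop_aux {a b c d e f : ℂ} (h1 : b*f = e*c) (h2 : a*e = b*d) (h3 : c*d = a*f)
    (h : ¬(a = 0 ∧ b = 0 ∧ c = 0)) : ∃ t : ℂ, d = t*a ∧ e = t*b ∧ f = t*c := by
  by_cases ha : a = 0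
  · by_cases hb : b = 0
    · have hc : c ≠ 0 := fun hc => h ⟨ha, hb, hc⟩
      refine ⟨f / c, ?_, ?_, ?_⟩
      · field_simp; linear_combination h3
      · field_simp; linear_combination -h1
      · field_simp
    · refine ⟨e / b, ?_, ?_, ?_⟩
      · field_simp; linear_combination -h2
      · field_simp
      · field_simp; linear_combination h1
  · refine ⟨d / a, ?_, ?_, ?_⟩
    · field_simp
    · field_simp; linear_combination h2
    · field_simp; linear_combination -h3

private lemma sl2_eq_zero (x : sl (Fin 2) ℂ) (h00 : x.val 0 0 = 0) (h01 : x.val 0 1 = 0)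
    (h10 : x.val 1 0 = 0) : x = 0 := by
  apply Subtype.ext
  ext i j
  fin_cases i <;> fin_cases j
  · exact h00
  · exact h01
  · exact h10
  · show x.val 1 1 = (0 : Matrix (Fin 2) (Fin 2) ℂ) 1 1
    rw [sl2_trace x, h00, neg_zero]; rfl

/-- commuting elements of sl2 are proportional -/
private lemma sl2_comm (x y : sl (Fin 2) ℂ) (hc : ⁅x, y⁆ = 0) :
    x = 0 ∨ ∃ t : ℂ, y = t • x := by
  have hm : x.val * y.val - y.val * x.val = 0 := by
    rw [← sl_bracket, hc]; rfl
  have hx := sl2_trace x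
  have hy := sl2_trace y
  have h00 := congrFun (congrFun hm 0) 0
  have h01 := congrFun (congrFun hm 0) 1
  have h10 := congrFun (congrFun hm 1) 0
  simp [Matrix.mul_apply, Fin.sum_univ_two, hx, hy] at h00 h01 h10
  have e1 : x.val 0 1 * y.val 1 0 = y.val 0 1 * x.val 1 0 := by linear_combination h00
  have e2 : x.val 0 0 * y.val 0 1 = x.val 0 1 * y.val 0 0 := by linear_combination h01/2
  have e3 : x.val 1 0 * y.val 0 0 = x.val 0 0 * y.val 1 0 := by linear_combination h10/2
  by_cases hz : x.val 0 0 = 0 ∧ x.val 0 1 = 0 ∧ x.val 1 0 = 0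
  · exact Or.inl (sl2_eq_zero x hz.1 hz.2.1 hz.2.2)
  · right
    obtain ⟨t, ht1, ht2, ht3⟩ := prop_aux e1 e2 e3 hz
    refine ⟨t, Subtype.ext ?_⟩
    ext i j
    fin_cases i <;> fin_cases j
    · exact ht1
    · exact ht2
    · exact ht3
    · show y.val 1 1 = t * x.val 1 1
      rw [hy, hx, ht1]; ring

/-- a commuting submodule of sl2 has dimension at most 1 -/
private lemma comm_finrank_le_one (S : Submodule ℂ (sl (Fin 2) ℂ))
    (hcomm : ∀ x ∈ S, ∀ y ∈ S, ⁅x, y⁆ = (0 : sl (Fin 2) ℂ)) : finrank ℂ S ≤ 1 := by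
  by_contra h
  push_neg at h
  obtain ⟨g, hg⟩ := exists_linearIndependent_of_le_finrank (R := ℂ) (M := S) h
  have hgi : LinearIndependent ℂ (S.subtype ∘ g) := hg.map' S.subtype S.ker_subtype
  rw [linearIndependent_fin2] at hgi
  have hc : ⁅((g 1 : S) : sl (Fin 2) ℂ), ((g 0 : S) : sl (Fin 2) ℂ)⁆ = 0 :=
    hcomm _ (g 1).property _ (g 0).property
  rcases sl2_comm _ _ hc with h1 | ⟨t, ht⟩
  · exact hgi.1 h1
  · exact hgi.2 t ht.symm

private def Ee : sl (Fin 2) ℂ :=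
  ⟨!![0,1;0,0], show Matrix.trace !![(0:ℂ),1;0,0] = 0 by simp⟩
private def Ff : sl (Fin 2) ℂ :=
  ⟨!![0,0;1,0], show Matrix.trace !![(0:ℂ),0;1,0] = 0 by simp⟩
private def Hh : sl (Fin 2) ℂ :=
  ⟨!![1,0;0,-1], show Matrix.trace !![(1:ℂ),0;0,-1] = 0 by simp⟩

private lemma span_lemma (z : sl (Fin 2) ℂ) :
    z = z.val 0 0 • Hh + z.val 0 1 • Ee + z.val 1 0 • Ff := by
  apply Subtype.ext
  show z.val = z.val 0 0 • Hh.val + z.val 0 1 • Ee.val + z.val 1 0 • Ff.val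
  ext i j
  fin_cases i <;> fin_cases j <;>
    · simp only [Ee, Ff, Hh, Matrix.add_apply, Matrix.smul_apply, smul_eq_mul,
        Fin.mk_zero, Fin.mk_one, Matrix.of_apply, Matrix.cons_val',
        Matrix.cons_val_zero, Matrix.cons_val_one, Matrix.head_cons, Matrix.head_fin_const,
        Matrix.empty_val', Matrix.cons_val_fin_one, sl2_trace z]
      try ring

private lemma lie_EF : ⁅Ee, Ff⁆ = Hh := by
  apply Subtype.ext
  show Ee.val * Ff.val - Ff.val * Ee.val = Hh.val
  ext i j
  fin_cases i <;> fin_cases j <;>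
    · simp only [Ee, Ff, Hh, Matrix.mul_apply, Matrix.sub_apply, Fin.sum_univ_two,
        Fin.mk_zero, Fin.mk_one, Matrix.of_apply, Matrix.cons_val',
        Matrix.cons_val_zero, Matrix.cons_val_one, Matrix.head_cons, Matrix.head_fin_const,
        Matrix.empty_val', Matrix.cons_val_fin_one]
      try ring

private lemma lie_HE : ⁅Hh, Ee⁆ = (2:ℂ) • Ee := by
  apply Subtype.ext
  show Hh.val * Ee.val - Ee.val * Hh.val = (2:ℂ) • Ee.val
  ext i j
  fin_cases i <;> fin_cases j <;>
    · simp only [Ee, Hh, Matrix.mul_apply, Matrix.sub_apply, Matrix.smul_apply, smul_eq_mul,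
        Fin.sum_univ_two, Fin.mk_zero, Fin.mk_one, Matrix.of_apply, Matrix.cons_val',
        Matrix.cons_val_zero, Matrix.cons_val_one, Matrix.head_cons, Matrix.head_fin_const,
        Matrix.empty_val', Matrix.cons_val_fin_one]
      try ring

private lemma lie_HF : ⁅Hh, Ff⁆ = (-2:ℂ) • Ff := by
  apply Subtype.ext
  show Hh.val * Ff.val - Ff.val * Hh.val = (-2:ℂ) • Ff.val
  ext i j
  fin_cases i <;> fin_cases j <;>
    · simp only [Ff, Hh, Matrix.mul_apply, Matrix.sub_apply, Matrix.smul_apply, smul_eq_mul,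
        Fin.sum_univ_two, Fin.mk_zero, Fin.mk_one, Matrix.of_apply, Matrix.cons_val',
        Matrix.cons_val_zero, Matrix.cons_val_one, Matrix.head_cons, Matrix.head_fin_const,
        Matrix.empty_val', Matrix.cons_val_fin_one]
      try ring

private lemma lie_EEx (x : sl (Fin 2) ℂ) :
    ⁅Ee, ⁅Ee, x⁆⁆ = (-2 * x.val 1 0) • Ee := by
  apply Subtype.ext
  show Ee.val * (Ee.val * x.val - x.val * Ee.val) -
      (Ee.val * x.val - x.val * Ee.val) * Ee.val = (-2 * x.val 1 0) • Ee.val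
  ext i j
  fin_cases i <;> fin_cases j <;>
    · simp only [Ee, Matrix.mul_apply, Matrix.sub_apply, Matrix.smul_apply, smul_eq_mul,
        Fin.sum_univ_two, Fin.mk_zero, Fin.mk_one, Matrix.of_apply, Matrix.cons_val',
        Matrix.cons_val_zero, Matrix.cons_val_one, Matrix.head_cons, Matrix.head_fin_const,
        Matrix.empty_val', Matrix.cons_val_fin_one, sl2_trace x]
      try ring

private lemma lie_FFx (x : sl (Fin 2) ℂ) :
    ⁅Ff, ⁅Ff, x⁆⁆ = (-2 * x.val 0 1) • Ff := by
  apply Subtype.ext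
  show Ff.val * (Ff.val * x.val - x.val * Ff.val) -
      (Ff.val * x.val - x.val * Ff.val) * Ff.val = (-2 * x.val 0 1) • Ff.val
  ext i j
  fin_cases i <;> fin_cases j <;>
    · simp only [Ff, Matrix.mul_apply, Matrix.sub_apply, Matrix.smul_apply, smul_eq_mul,
        Fin.sum_univ_two, Fin.mk_zero, Fin.mk_one, Matrix.of_apply, Matrix.cons_val',
        Matrix.cons_val_zero, Matrix.cons_val_one, Matrix.head_cons, Matrix.head_fin_const,
        Matrix.empty_val', Matrix.cons_val_fin_one, sl2_trace x]
      try ring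

/-- a Lie algebra map on sl2 vanishing at a nonzero element vanishes -/
private lemma phi_kill {M : Type*} [LieRing M] [LieAlgebra ℂ M]
    (φ : sl (Fin 2) ℂ →ₗ⁅ℂ⁆ M) (x : sl (Fin 2) ℂ) (hx : x ≠ 0) (h0 : φ x = 0) : φ = 0 := by
  suffices hEFH : φ Ee = 0 ∧ φ Ff = 0 ∧ φ Hh = 0 by
    ext z
    conv_lhs => rw [span_lemma z]
    simp [hEFH.1, hEFH.2.1, hEFH.2.2]
  have hEcase : φ Ee = 0 → φ Ee = 0 ∧ φ Ff = 0 ∧ φ Hh = 0 := by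
    intro hE
    have hH : φ Hh = 0 := by rw [← lie_EF, LieHom.map_lie, hE, zero_lie]
    have hF : φ Ff = 0 := by
      have h2 : φ ⁅Hh, Ff⁆ = 0 := by rw [LieHom.map_lie, hH, zero_lie]
      rw [lie_HF, map_smul φ] at h2
      rcases smul_eq_zero.mp h2 with h | h
      · norm_num at h
      · exact h
    exact ⟨hE, hF, hH⟩
  have hFcase : φ Ff = 0 → φ Ee = 0 ∧ φ Ff = 0 ∧ φ Hh = 0 := by
    intro hF
    have hH : φ Hh = 0 := by rw [← lie_EF, LieHom.map_lie, hF, lie_zero]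
    have hE : φ Ee = 0 := by
      have h2 : φ ⁅Hh, Ee⁆ = 0 := by rw [LieHom.map_lie, hH, zero_lie]
      rw [lie_HE, map_smul φ] at h2
      rcases smul_eq_zero.mp h2 with h | h
      · norm_num at h
      · exact h
    exact ⟨hE, hF, hH⟩
  by_cases hγ : x.val 1 0 = 0
  · by_cases hα : x.val 0 1 = 0
    · -- x is a nonzero multiple of Hh
      have hβ : x.val 0 0 ≠ 0 := fun hβ => hx (sl2_eq_zero x hβ hα hγ)
      have hxH : x = x.val 0 0 • Hh := by
        conv_lhs => rw [span_lemma x]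
        rw [hα, hγ, zero_smul, zero_smul, add_zero, add_zero]
      have hH : φ Hh = 0 := by
        have h2 : x.val 0 0 • φ Hh = 0 := by rw [← map_smul φ, ← hxH, h0]
        exact (smul_eq_zero.mp h2).resolve_left hβ
      have hE : φ Ee = 0 := by
        have h2 : φ ⁅Hh, Ee⁆ = 0 := by rw [LieHom.map_lie, hH, zero_lie]
        rw [lie_HE, map_smul φ] at h2
        rcases smul_eq_zero.mp h2 with h | h
        · norm_num at h
        · exact h
      exact hEcase hE
    · -- x.val 0 1 ≠ 0: use ⁅Ff,⁅Ff,x⁆⁆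
      apply hFcase
      have h2 : (-2 * x.val 0 1) • φ Ff = 0 := by
        rw [← map_smul φ, ← lie_FFx x, LieHom.map_lie, LieHom.map_lie, h0, lie_zero,
          lie_zero]
      rcases smul_eq_zero.mp h2 with h | h
      · exact absurd (by linear_combination -h/2) hα
      · exact h
  · -- x.val 1 0 ≠ 0: use ⁅Ee,⁅Ee,x⁆⁆
    apply hEcase
    have h2 : (-2 * x.val 1 0) • φ Ee = 0 := by
      rw [← map_smul φ, ← lie_EEx x, LieHom.map_lie, LieHom.map_lie, h0, lie_zero,
        lie_zero]
    rcases smul_eq_zero.mp h2 with h | h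
    · exact absurd (by linear_combination -h/2) hγ
    · exact h

end Stmt15Aux

set_option synthInstance.maxHeartbeats 1000000 in
open Stmt15Aux in
/-- If the semidirect product sl₂(ℂ) ⋉_φ ℂ^ℓ (with bracket
[(x,a),(y,b)] = ([x,y], φ(x)b - φ(y)a)) contains an abelian subalgebra of
dimension n - 2 = ℓ + 1, then φ = 0. -/
theorem stmt_15 (ℓ : ℕ)
    (φ : LieAlgebra.SpecialLinear.sl (Fin 2) ℂ →ₗ⁅ℂ⁆ Module.End ℂ (Fin ℓ → ℂ))
    (W : Submodule ℂ ((LieAlgebra.SpecialLinear.sl (Fin 2) ℂ) × (Fin ℓ → ℂ)))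
    (hdim : finrank ℂ W = ℓ + 1)
    (habelian : ∀ p ∈ W, ∀ q ∈ W,
      (⁅p.1, q.1⁆ : LieAlgebra.SpecialLinear.sl (Fin 2) ℂ) = 0 ∧
        φ p.1 q.2 - φ q.1 p.2 = 0) :
    φ = 0 := by
  classical
  have hLdef : True := trivial
  let f : W →ₗ[ℂ] LieAlgebra.SpecialLinear.sl (Fin 2) ℂ := (LinearMap.fst ℂ (LieAlgebra.SpecialLinear.sl (Fin 2) ℂ) (Fin ℓ → ℂ)).comp W.subtype
  have hrk := LinearMap.finrank_range_add_finrank_ker f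
  rw [hdim] at hrk
  -- the kernel of f injects into ℂ^ℓ
  let g : LinearMap.ker f →ₗ[ℂ] (Fin ℓ → ℂ) :=
    (LinearMap.snd ℂ (LieAlgebra.SpecialLinear.sl (Fin 2) ℂ) (Fin ℓ → ℂ)).comp (W.subtype.comp (LinearMap.ker f).subtype)
  have hker1 : ∀ u : LinearMap.ker f, ((u : W) : LieAlgebra.SpecialLinear.sl (Fin 2) ℂ × (Fin ℓ → ℂ)).1 = 0 := fun u => u.property
  have hginj : Function.Injective g := by
    intro u v huv
    apply Subtype.ext; apply Subtype.ext
    exact Prod.ext (by rw [hker1 u, hker1 v]) huv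
  have hkerle : finrank ℂ (LinearMap.ker f) ≤ ℓ := by
    have := LinearMap.finrank_le_finrank_of_injective hginj
    simpa using this
  -- the range of f consists of commuting elements
  have hcomm : ∀ x ∈ LinearMap.range f, ∀ y ∈ LinearMap.range f, ⁅x, y⁆ = (0 : LieAlgebra.SpecialLinear.sl (Fin 2) ℂ) := by
    rintro x ⟨⟨p, hp⟩, rfl⟩ y ⟨⟨q, hq⟩, rfl⟩
    exact (habelian p hp q hq).1
  have hrle : finrank ℂ (LinearMap.range f) ≤ 1 := comm_finrank_le_one _ hcomm
  have hreq : finrank ℂ (LinearMap.range f) = 1 := by omega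
  have hkeq : finrank ℂ (LinearMap.ker f) = ℓ := by omega
  -- hence the image of the kernel under snd is all of ℂ^ℓ
  have hrangeg : LinearMap.range g = ⊤ := by
    apply Submodule.eq_top_of_finrank_eq
    rw [g.finrank_range_of_inj hginj, hkeq]
    simp
  have hvert : ∀ a : Fin ℓ → ℂ, ((0 : LieAlgebra.SpecialLinear.sl (Fin 2) ℂ), a) ∈ W := by
    intro a
    have : a ∈ LinearMap.range g := hrangeg ▸ Submodule.mem_top
    obtain ⟨u, hu⟩ := this
    have : ((u : W) : LieAlgebra.SpecialLinear.sl (Fin 2) ℂ × (Fin ℓ → ℂ)) = ((0 : LieAlgebra.SpecialLinear.sl (Fin 2) ℂ), a) := Prod.ext (hker1 u) hu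
    rw [← this]
    exact ((u : W) : W).property
  -- φ vanishes on the range of f
  have hphi : ∀ x ∈ LinearMap.range f, φ x = 0 := by
    rintro x ⟨⟨p, hp⟩, rfl⟩
    apply LinearMap.ext
    intro a
    have h := (habelian ((0 : LieAlgebra.SpecialLinear.sl (Fin 2) ℂ), a) (hvert a) p hp).2
    simp only [map_zero, LinearMap.zero_apply, zero_sub, neg_eq_zero] at h
    simpa [f] using h
  -- the range of f contains a nonzero element
  have hne : ∃ x ∈ LinearMap.range f, x ≠ (0 : LieAlgebra.SpecialLinear.sl (Fin 2) ℂ) := by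
    by_contra hcon
    push_neg at hcon
    have : LinearMap.range f = ⊥ := by
      rw [Submodule.eq_bot_iff]; exact hcon
    rw [this, finrank_bot] at hreq
    omega
  obtain ⟨x, hxr, hxne⟩ := hne
  exact phi_kill φ x hxne (hphi x hxr)
end

section
/- Let g be a k-abelian filiform nilpotent Lie algebra of dimension n ≥ k+3 ≥ 6 over a field of characteristic zero. Then β(g) = n − k = dim C^k(g), and C^k(g) is the unique abelian ideal of maximal dimension; moreover ⌈n/2⌉ ≤ β(g) ≤ n−3. -/
open Module

namespace Stmt17Aux

open LieModule

set_option linter.unusedSectionVars false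

variable {K L : Type*} [Field K] [LieRing L] [LieAlgebra K L]

theorem isLieAbelian_iff' (I : LieIdeal K L) :
    IsLieAbelian I ↔ ∀ x ∈ I, ∀ y ∈ I, ⁅x, y⁆ = (0 : L) := by
  constructor
  · intro h x hx y hy
    exact congrArg Subtype.val (h.trivial ⟨x, hx⟩ ⟨y, hy⟩)
  · intro h
    constructor
    intro a b
    ext
    exact h a a.2 b b.2

theorem D1_eq : lowerCentralSeries K L L 1 = ⁅(⊤ : LieIdeal K L), (⊤ : LieSubmodule K L L)⁆ := by
  rw [show (1:ℕ) = 0 + 1 from rfl, LieModule.lowerCentralSeries_succ, lowerCentralSeries_zero]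

theorem mem_D1 (a b : L) : ⁅a, b⁆ ∈ lowerCentralSeries K L L 1 := by
  rw [D1_eq]
  exact LieSubmodule.lie_mem_lie (LieSubmodule.mem_top a) (LieSubmodule.mem_top b)

theorem mem_D_succ {j : ℕ} {b : L} (a : L) (hb : b ∈ lowerCentralSeries K L L j) :
    ⁅a, b⁆ ∈ lowerCentralSeries K L L (j+1) := by
  rw [LieModule.lowerCentralSeries_succ]
  exact LieSubmodule.lie_mem_lie (LieSubmodule.mem_top a) hb

theorem mem_D_succ' {j : ℕ} {b : L} (a : L) (hb : b ∈ lowerCentralSeries K L L j) :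
    ⁅b, a⁆ ∈ lowerCentralSeries K L L (j+1) := by
  rw [show ⁅b, a⁆ = -⁅a, b⁆ by rw [lie_skew]]
  exact neg_mem (mem_D_succ a hb)

theorem lcs_bracket_mem : ∀ (j i : ℕ) (x y : L), x ∈ lowerCentralSeries K L L i →
    y ∈ lowerCentralSeries K L L j →
    ⁅x, y⁆ ∈ lowerCentralSeries K L L (i + j + 1) := by
  intro j
  induction j with
  | zero =>
    intro i x y hx _
    have : ⁅y, x⁆ ∈ lowerCentralSeries K L L (i + 1) := by
      rw [LieModule.lowerCentralSeries_succ]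
      exact LieSubmodule.lie_mem_lie (LieSubmodule.mem_top y) hx
    have h2 : ⁅x, y⁆ = -⁅y, x⁆ := by rw [lie_skew]
    rw [h2]
    exact neg_mem this
  | succ j ih =>
    intro i x y hx hy
    rw [LieModule.lowerCentralSeries_succ] at hy
    let P : Submodule K L :=
      { carrier := {y | ⁅x, y⁆ ∈ lowerCentralSeries K L L (i + (j+1) + 1)}
        add_mem' := by intro a b ha hb; simp only [Set.mem_setOf_eq, lie_add]
                       exact add_mem ha hb
        zero_mem' := by simp only [Set.mem_setOf_eq, lie_zero]; exact zero_mem _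
        smul_mem' := by intro c a ha; simp only [Set.mem_setOf_eq, lie_smul]
                        exact Submodule.smul_mem _ c ha }
    have hspan : (⁅(⊤ : LieIdeal K L), lowerCentralSeries K L L j⁆ :
        LieSubmodule K L L).toSubmodule ≤ P := by
      rw [LieSubmodule.lieIdeal_oper_eq_linear_span]
      apply Submodule.span_le.mpr
      rintro _ ⟨⟨z, -⟩, ⟨w, hw⟩, rfl⟩
      show ⁅x, ⁅z, w⁆⁆ ∈ lowerCentralSeries K L L (i + (j+1) + 1)
      have h1 : ⁅x, z⁆ ∈ lowerCentralSeries K L L (i + 1) := by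
        have : ⁅z, x⁆ ∈ lowerCentralSeries K L L (i + 1) := by
          rw [LieModule.lowerCentralSeries_succ]
          exact LieSubmodule.lie_mem_lie (LieSubmodule.mem_top z) hx
        rw [show ⁅x, z⁆ = -⁅z, x⁆ by rw [lie_skew]]
        exact neg_mem this
      have h2 : ⁅⁅x, z⁆, w⁆ ∈ lowerCentralSeries K L L ((i+1) + j + 1) := ih (i+1) _ _ h1 hw
      have h3 : ⁅x, w⁆ ∈ lowerCentralSeries K L L (i + j + 1) := ih i _ _ hx hw
      have h4 : ⁅z, ⁅x, w⁆⁆ ∈ lowerCentralSeries K L L (i + j + 2) := by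
        rw [LieModule.lowerCentralSeries_succ]
        exact LieSubmodule.lie_mem_lie (LieSubmodule.mem_top z) h3
      rw [leibniz_lie]
      have e1 : i + 1 + j + 1 = i + (j+1) + 1 := by omega
      rw [e1] at h2
      have e2 : i + j + 2 = i + (j+1) + 1 := by omega
      rw [e2] at h4
      exact add_mem h2 h4
    exact hspan hy

theorem chain_absorb (I : LieIdeal K L) (s m0 : ℕ)
    (hbot : lowerCentralSeries K L L m0 = ⊥)
    (hs : lowerCentralSeries K L L s ≤ I ⊔ lowerCentralSeries K L L (s+1)) :
    lowerCentralSeries K L L s ≤ I := by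
  have step : ∀ j, lowerCentralSeries K L L (s+j) ≤ I ⊔ lowerCentralSeries K L L (s+j+1) := by
    intro j
    induction j with
    | zero => exact hs
    | succ j ih =>
      have h1 : lowerCentralSeries K L L (s+j+1)
          = ⁅(⊤ : LieIdeal K L), lowerCentralSeries K L L (s+j)⁆ :=
        LieModule.lowerCentralSeries_succ K L L (s+j)
      calc lowerCentralSeries K L L (s+(j+1))
          = ⁅(⊤ : LieIdeal K L), lowerCentralSeries K L L (s+j)⁆ := by
            rw [← h1]; ring_nf
        _ ≤ ⁅(⊤ : LieIdeal K L), I ⊔ lowerCentralSeries K L L (s+j+1)⁆ :=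
            LieSubmodule.mono_lie_right _ ih
        _ = ⁅(⊤ : LieIdeal K L), I⁆ ⊔ ⁅(⊤ : LieIdeal K L), lowerCentralSeries K L L (s+j+1)⁆ :=
            LieSubmodule.lie_sup _ _ _
        _ ≤ I ⊔ lowerCentralSeries K L L (s+(j+1)+1) := by
            refine sup_le_sup (LieSubmodule.lie_le_right _ _) (le_of_eq ?_)
            rw [show s+(j+1)+1 = (s+j+1)+1 by ring]
            exact (LieModule.lowerCentralSeries_succ K L L (s+j+1)).symm
  have chain : ∀ j, lowerCentralSeries K L L s ≤ I ⊔ lowerCentralSeries K L L (s+j+1) := by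
    intro j
    induction j with
    | zero => exact hs
    | succ j ih =>
      have h2 : lowerCentralSeries K L L (s+j+1) ≤ I ⊔ lowerCentralSeries K L L (s+(j+1)+1) := by
        rw [show s+j+1 = s+(j+1) by ring]
        exact step (j+1)
      calc lowerCentralSeries K L L s ≤ I ⊔ lowerCentralSeries K L L (s+j+1) := ih
        _ ≤ I ⊔ (I ⊔ lowerCentralSeries K L L (s+(j+1)+1)) := sup_le_sup le_rfl h2
        _ = I ⊔ lowerCentralSeries K L L (s+(j+1)+1) := by rw [← sup_assoc, sup_idem]
  refine le_trans (chain m0) (sup_le le_rfl ?_)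
  rw [eq_bot_iff] at hbot
  exact le_trans (antitone_lowerCentralSeries K L L (by omega)) (le_trans hbot bot_le)

theorem codim_one_gen {V : Type*} [AddCommGroup V] [Module K V] [FiniteDimensional K V]
    (N M : Submodule K V) (hle : N ≤ M) (hr : finrank K M = finrank K N + 1) :
    ∃ e ∈ M, ∀ x ∈ M, ∃ a : K, ∃ u ∈ N, x = a • e + u := by
  have hlt : N < M := lt_of_le_of_ne hle (by rintro rfl; omega)
  obtain ⟨e, heM, heN⟩ := SetLike.exists_of_lt hlt
  have hsup : Submodule.span K {e} ⊔ N = M := by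
    apply Submodule.eq_of_le_of_finrank_le
    · exact sup_le ((Submodule.span_singleton_le_iff_mem e M).mpr heM) hle
    · have h1 : N < Submodule.span K {e} ⊔ N :=
        lt_of_le_of_ne le_sup_right (fun h => heN (h ▸ (le_sup_left : Submodule.span K {e} ≤ _)
          (Submodule.mem_span_singleton_self e)))
      have := Submodule.finrank_lt_finrank_of_lt h1
      omega
  refine ⟨e, heM, fun x hx => ?_⟩
  rw [← hsup] at hx
  obtain ⟨p, hp, u, hu, h⟩ := Submodule.mem_sup.mp hx
  obtain ⟨a, rfl⟩ := Submodule.mem_span_singleton.mp hp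
  exact ⟨a, u, hu, h.symm⟩

variable [FiniteDimensional K L]

theorem D_bot (n : ℕ) (hn : 2 ≤ n)
    (hfiliform : ∀ i : ℕ, 2 ≤ i → i ≤ n →
      finrank K (LieModule.lowerCentralSeries K L L (i - 1)) = n - i) :
    lowerCentralSeries K L L (n-1) = ⊥ := by
  have h0 : finrank K (lowerCentralSeries K L L (n-1)) = 0 := by
    have := hfiliform n (by omega) le_rfl
    simpa [Nat.sub_self] using this
  have : (lowerCentralSeries K L L (n-1)).toSubmodule = ⊥ :=
    Submodule.finrank_eq_zero.mp h0
  rwa [← LieSubmodule.toSubmodule_inj, LieSubmodule.bot_toSubmodule]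

theorem ideal_classify (n : ℕ) (hn : 3 ≤ n)
    (hfiliform : ∀ i : ℕ, 2 ≤ i → i ≤ n →
      finrank K (LieModule.lowerCentralSeries K L L (i - 1)) = n - i)
    (I : LieIdeal K L) (hI : I ≤ lowerCentralSeries K L L 1) (hne : I ≠ ⊥) :
    ∃ t, 1 ≤ t ∧ t ≤ n - 2 ∧ I = lowerCentralSeries K L L t := by
  classical
  have Dbot : lowerCentralSeries K L L (n-1) = ⊥ := D_bot n (by omega) hfiliform
  have hex : ∃ m, ¬ I ≤ lowerCentralSeries K L L m :=
    ⟨n-1, fun h => hne (le_bot_iff.mp (Dbot ▸ h))⟩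
  set t' := Nat.find hex with ht'def
  have ht' : ¬ I ≤ lowerCentralSeries K L L t' := Nat.find_spec hex
  have hlt : ∀ m < t', I ≤ lowerCentralSeries K L L m := fun m hm => by
    by_contra h
    have h2 : Nat.find hex ≤ m := Nat.find_le h
    omega
  have ht'2 : 2 ≤ t' := by
    rcases Nat.lt_or_ge t' 2 with h | h
    · interval_cases t'
      · exact absurd (le_top.trans_eq (lowerCentralSeries_zero K L L).symm) ht'
      · exact absurd hI ht'
    · exact h
  set t := t' - 1 with htdef
  have hIt : I ≤ lowerCentralSeries K L L t := hlt t (by omega)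
  have hIt1 : ¬ I ≤ lowerCentralSeries K L L (t+1) := by
    rwa [show t + 1 = t' by omega]
  have ht1 : 1 ≤ t := by omega
  have htn : t ≤ n - 2 := by
    by_contra h
    apply hIt1
    have h1 : I ≤ lowerCentralSeries K L L (n-1) :=
      le_trans hIt (antitone_lowerCentralSeries K L L (by omega))
    rw [Dbot] at h1
    exact le_trans h1 bot_le
  have hrt : finrank K (lowerCentralSeries K L L t) = n - (t+1) := by
    have := hfiliform (t+1) (by omega) (by omega)
    simpa using this
  have hrt1 : finrank K (lowerCentralSeries K L L (t+1)) = n - (t+2) := by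
    have := hfiliform (t+2) (by omega) (by omega)
    simpa [show t+2-1 = t+1 by omega] using this
  have hsup : I ⊔ lowerCentralSeries K L L (t+1) = lowerCentralSeries K L L t := by
    rw [← LieSubmodule.toSubmodule_inj, LieSubmodule.sup_toSubmodule]
    apply Submodule.eq_of_le_of_finrank_le
    · exact sup_le hIt (antitone_lowerCentralSeries K L L (by omega))
    · have hco : finrank K (lowerCentralSeries K L L t).toSubmodule = n - (t+1) := hrt
      have hco1 : finrank K (lowerCentralSeries K L L (t+1)).toSubmodule = n - (t+2) := hrt1
      have hstrict : (lowerCentralSeries K L L (t+1)).toSubmodule <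
          I.toSubmodule ⊔ (lowerCentralSeries K L L (t+1)).toSubmodule := by
        refine lt_of_le_of_ne le_sup_right (fun h => hIt1 ?_)
        intro x hx
        exact (h ▸ (le_sup_left : I.toSubmodule ≤ _)) hx
      have h3 := Submodule.finrank_lt_finrank_of_lt hstrict
      omega
  have habs : lowerCentralSeries K L L t ≤ I :=
    chain_absorb I t (n-1) Dbot (le_of_eq hsup.symm)
  exact ⟨t, ht1, htn, le_antisymm hIt habs⟩

theorem abelian_ideal_le_D1 (n : ℕ) (hn : 6 ≤ n) (hdim : finrank K L = n)
    (hfiliform : ∀ i : ℕ, 2 ≤ i → i ≤ n →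
      finrank K (LieModule.lowerCentralSeries K L L (i - 1)) = n - i)
    (hD1 : ¬ IsLieAbelian (lowerCentralSeries K L L 1))
    (I : LieIdeal K L) (hab : IsLieAbelian I) :
    I ≤ lowerCentralSeries K L L 1 := by
  by_contra hIle
  obtain ⟨x, hxI, hx1⟩ := SetLike.not_le_iff_exists.mp hIle
  set J : LieIdeal K L := I ⊓ lowerCentralSeries K L L 1 with hJdef
  have hJab : IsLieAbelian J := by
    rw [isLieAbelian_iff']
    intro a ha b hb
    exact (isLieAbelian_iff' I).mp hab a ha.1 b hb.1
  have hJ2 : J ≤ lowerCentralSeries K L L 2 := by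
    rcases eq_or_ne J ⊥ with h | h
    · rw [h]; exact bot_le
    · obtain ⟨t, ht1, _, hJt⟩ := ideal_classify n (by omega) hfiliform J inf_le_right h
      rcases Nat.lt_or_ge t 2 with h2 | h2
      · have : t = 1 := by omega
        rw [this] at hJt
        rw [← hJt] at hD1
        exact absurd hJab hD1
      · rw [hJt]
        exact antitone_lowerCentralSeries K L L h2
  rcases eq_or_ne (I ⊔ lowerCentralSeries K L L 1) ⊤ with htop | htop
  · have hstep : lowerCentralSeries K L L 1 ≤ I ⊔ lowerCentralSeries K L L 2 := by
      rw [D1_eq]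
      rw [LieSubmodule.lie_le_iff]
      intro a _ b hb
      have hbmem : b ∈ I ⊔ lowerCentralSeries K L L 1 := by
        rw [htop]; exact LieSubmodule.mem_top b
      obtain ⟨i, hi, c, hc, hbc⟩ := (LieSubmodule.mem_sup _ _ _).mp hbmem
      have hamem : a ∈ I ⊔ lowerCentralSeries K L L 1 := by
        rw [htop]; exact LieSubmodule.mem_top a
      obtain ⟨i', hi', c', hc', hac⟩ := (LieSubmodule.mem_sup _ _ _).mp hamem
      have h1 : ⁅a, i⁆ ∈ I := I.lie_mem hi
      have h2 : ⁅i', c⁆ ∈ I := by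
        rw [show ⁅i', c⁆ = -⁅c, i'⁆ by rw [lie_skew]]
        exact neg_mem (I.lie_mem hi')
      have h3 : ⁅c', c⁆ ∈ lowerCentralSeries K L L 2 := mem_D_succ c' hc
      have : ⁅a, b⁆ = ⁅a, i⁆ + (⁅i', c⁆ + ⁅c', c⁆) := by
        rw [← hbc, ← hac]; simp [lie_add, add_lie]
      rw [this]
      exact add_mem ((LieSubmodule.mem_sup _ _ _).mpr ⟨_, h1, 0, zero_mem _, by simp⟩)
        (add_mem ((LieSubmodule.mem_sup _ _ _).mpr ⟨_, h2, 0, zero_mem _, by simp⟩)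
          ((LieSubmodule.mem_sup _ _ _).mpr ⟨0, zero_mem _, _, h3, by simp⟩))
    have hD1I : lowerCentralSeries K L L 1 ≤ I :=
      chain_absorb I 1 (n-1) (D_bot n (by omega) hfiliform) hstep
    apply hD1
    rw [isLieAbelian_iff']
    intro a ha b hb
    exact (isLieAbelian_iff' I).mp hab a (hD1I ha) b (hD1I hb)
  · have key : ∀ z : L, ⁅z, x⁆ ∈ lowerCentralSeries K L L 2 := by
      intro z
      apply hJ2
      exact ⟨I.lie_mem hxI, mem_D1 z x⟩
    set M : Submodule K L := Submodule.span K {x} ⊔ (lowerCentralSeries K L L 1).toSubmodule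
      with hMdef
    have hMne : M ≠ ⊤ := by
      intro h
      apply htop
      rw [← LieSubmodule.toSubmodule_inj, LieSubmodule.sup_toSubmodule,
        LieSubmodule.top_toSubmodule]
      apply Submodule.eq_top_iff'.mpr
      intro a
      have : a ∈ M := h ▸ trivial
      rw [hMdef] at this
      obtain ⟨p, hp, u, hu, hpu⟩ := Submodule.mem_sup.mp this
      obtain ⟨c, rfl⟩ := Submodule.mem_span_singleton.mp hp
      exact Submodule.mem_sup.mpr ⟨c • x, I.toSubmodule.smul_mem c hxI, u, hu, hpu⟩
    obtain ⟨y, hy⟩ : ∃ y : L, y ∉ M := by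
      by_contra h
      push_neg at h
      exact hMne (Submodule.eq_top_iff'.mpr h)
    have hr1 : finrank K (lowerCentralSeries K L L 1).toSubmodule = n - 2 := by
      have := hfiliform 2 le_rfl (by omega)
      exact this
    have hrM : finrank K M = n - 1 := by
      have hlt : (lowerCentralSeries K L L 1).toSubmodule < M := by
        refine lt_of_le_of_ne le_sup_right (fun h => hx1 ?_)
        have : x ∈ M := (le_sup_left : Submodule.span K {x} ≤ M)
          (Submodule.mem_span_singleton_self x)
        rw [← h] at this
        exact this
      have h1 := Submodule.finrank_lt_finrank_of_lt hlt
      have h2 : M < ⊤ := lt_of_le_of_ne le_top hMne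
      have h3 := Submodule.finrank_lt_finrank_of_lt h2
      rw [finrank_top, hdim] at h3
      omega
    have hyM : Submodule.span K {y} ⊔ M = ⊤ := by
      apply Submodule.eq_of_le_of_finrank_le le_top
      have hlt : M < Submodule.span K {y} ⊔ M :=
        lt_of_le_of_ne le_sup_right (fun h => hy (h ▸ (le_sup_left : Submodule.span K {y} ≤ _)
          (Submodule.mem_span_singleton_self y)))
      have h1 := Submodule.finrank_lt_finrank_of_lt hlt
      rw [finrank_top, hdim]
      omega
    have hdecomp : ∀ a : L, ∃ c d : K, ∃ u ∈ lowerCentralSeries K L L 1,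
        a = c • y + (d • x + u) := by
      intro a
      have : a ∈ Submodule.span K {y} ⊔ M := by rw [hyM]; trivial
      obtain ⟨p, hp, m, hm, hpm⟩ := Submodule.mem_sup.mp this
      obtain ⟨c, rfl⟩ := Submodule.mem_span_singleton.mp hp
      rw [hMdef] at hm
      obtain ⟨q, hq, u, hu, hqu⟩ := Submodule.mem_sup.mp hm
      obtain ⟨d, rfl⟩ := Submodule.mem_span_singleton.mp hq
      exact ⟨c, d, u, hu, by rw [← hpm, ← hqu]⟩
    have hD1D2 : lowerCentralSeries K L L 1 ≤ lowerCentralSeries K L L 2 := by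
      rw [D1_eq, LieSubmodule.lie_le_iff]
      intro a _ b _
      have h_x : ∀ w : L, ⁅x, w⁆ ∈ lowerCentralSeries K L L 2 := by
        intro w
        rw [show ⁅x, w⁆ = -⁅w, x⁆ by rw [lie_skew]]
        exact neg_mem (key w)
      have h_y : ∀ w : L, ⁅y, w⁆ ∈ lowerCentralSeries K L L 2 := by
        intro w
        obtain ⟨c, d, u, hu, rfl⟩ := hdecomp w
        have h1 : ⁅y, c • y⁆ = (0:L) := by rw [lie_smul, lie_self, smul_zero]
        have h2 : ⁅y, d • x⁆ ∈ lowerCentralSeries K L L 2 := by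
          rw [lie_smul]
          exact Submodule.smul_mem _ d (by
            rw [show ⁅y, x⁆ = -⁅x, y⁆ by rw [lie_skew]]
            exact neg_mem (h_x y))
        have h3 : ⁅y, u⁆ ∈ lowerCentralSeries K L L 2 := mem_D_succ y hu
        rw [lie_add, lie_add, h1, zero_add]
        exact add_mem h2 h3
      obtain ⟨c, d, u, hu, rfl⟩ := hdecomp a
      have h1 : ⁅c • y, b⁆ ∈ lowerCentralSeries K L L 2 := by
        rw [smul_lie]; exact Submodule.smul_mem _ c (h_y b)
      have h2 : ⁅d • x, b⁆ ∈ lowerCentralSeries K L L 2 := by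
        rw [smul_lie]; exact Submodule.smul_mem _ d (h_x b)
      have h3 : ⁅u, b⁆ ∈ lowerCentralSeries K L L 2 := mem_D_succ' b hu
      rw [add_lie, add_lie]
      exact add_mem h1 (add_mem h2 h3)
    have hr2 : finrank K (lowerCentralSeries K L L 2) = n - 3 := by
      have := hfiliform 3 (by omega) (by omega)
      simpa [show (3:ℕ)-1 = 2 from rfl] using this
    have := Submodule.finrank_mono
      (((LieSubmodule.toSubmodule_le_toSubmodule _ _).mpr hD1D2) :
        (lowerCentralSeries K L L 1).toSubmodule ≤ (lowerCentralSeries K L L 2).toSubmodule)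
    have e1 : finrank K (lowerCentralSeries K L L 1).toSubmodule = n - 2 := hr1
    have e2 : finrank K (lowerCentralSeries K L L 2).toSubmodule = n - 3 := hr2
    omega

theorem two_k_le_n (n k : ℕ) (hk : 3 ≤ k) (hn : k + 3 ≤ n)
    (hfiliform : ∀ i : ℕ, 2 ≤ i → i ≤ n →
      finrank K (LieModule.lowerCentralSeries K L L (i - 1)) = n - i)
    (hnab : ¬ IsLieAbelian (lowerCentralSeries K L L (k-2))) : 2 * k ≤ n := by
  by_contra hcon
  apply hnab
  rw [isLieAbelian_iff']
  intro x hx y hy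
  have Dbot : lowerCentralSeries K L L (n-1) = ⊥ := D_bot n (by omega) hfiliform
  have hle : (lowerCentralSeries K L L (k-1)).toSubmodule ≤
      (lowerCentralSeries K L L (k-2)).toSubmodule :=
    (LieSubmodule.toSubmodule_le_toSubmodule _ _).mpr
      (antitone_lowerCentralSeries K L L (by omega))
  have hr1 : finrank K (lowerCentralSeries K L L (k-2)).toSubmodule = n - (k-1) := by
    have := hfiliform (k-1) (by omega) (by omega)
    rwa [show k-1-1 = k-2 by omega] at this
  have hr2 : finrank K (lowerCentralSeries K L L (k-1)).toSubmodule = n - k :=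
    hfiliform k (by omega) (by omega)
  obtain ⟨e, heM, hdec⟩ := codim_one_gen _ _ hle (by rw [hr1, hr2]; omega)
  obtain ⟨a, u, hu, hxe⟩ := hdec x hx
  obtain ⟨b, v, hv, hye⟩ := hdec y hy
  have h1 : ⁅e, v⁆ ∈ lowerCentralSeries K L L (2*k-2) := by
    have := lcs_bracket_mem (k-1) (k-2) e v heM hv
    rwa [show (k-2) + (k-1) + 1 = 2*k-2 by omega] at this
  have h2 : ⁅u, e⁆ ∈ lowerCentralSeries K L L (2*k-2) := by
    have := lcs_bracket_mem (k-2) (k-1) u e hu heM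
    rwa [show (k-1) + (k-2) + 1 = 2*k-2 by omega] at this
  have h3 : ⁅u, v⁆ ∈ lowerCentralSeries K L L (2*k-2) := by
    have := lcs_bracket_mem (k-1) (k-1) u v hu hv
    exact antitone_lowerCentralSeries K L L (by omega) this
  have hxy : ⁅x, y⁆ ∈ lowerCentralSeries K L L (2*k-2) := by
    rw [hxe, hye, lie_add, add_lie, add_lie]
    refine add_mem (add_mem ?_ ?_) (add_mem ?_ h3)
    · rw [smul_lie, lie_smul, lie_self, smul_zero, smul_zero]; exact zero_mem _
    · rw [lie_smul]; exact Submodule.smul_mem _ b h2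
    · rw [smul_lie]; exact Submodule.smul_mem _ a h1
  have hb : lowerCentralSeries K L L (2*k-2) ≤ ⊥ := by
    rw [← Dbot]
    exact antitone_lowerCentralSeries K L L (by omega)
  simpa using hb hxy

end Stmt17Aux

/-- For a k-abelian filiform nilpotent Lie algebra of dimension n ≥ k+3 ≥ 6,
β(g) = n - k = dim C^k(g), C^k(g) is the unique abelian ideal of maximal dimension,
and ⌈n/2⌉ ≤ β(g) ≤ n - 3.  Here C^i(g) (for i ≥ 1, with C^1(g) = g) is the term
`LieModule.lowerCentralSeries K L L (i-1)` of the lower central series. -/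
theorem stmt_17 (K L : Type*) [Field K] [CharZero K] [LieRing L] [LieAlgebra K L]
    [FiniteDimensional K L] [LieRing.IsNilpotent L] (n k : ℕ)
    (hk : 3 ≤ k) (hn : k + 3 ≤ n) (hdim : finrank K L = n)
    (hfiliform : ∀ i : ℕ, 2 ≤ i → i ≤ n →
      finrank K (LieModule.lowerCentralSeries K L L (i - 1)) = n - i)
    (hkab : IsLieAbelian (LieModule.lowerCentralSeries K L L (k - 1)))
    (hkmin : ∀ j : ℕ, 1 ≤ j → j < k →
      ¬ IsLieAbelian (LieModule.lowerCentralSeries K L L (j - 1))) :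
    betaInv K L = n - k ∧
      finrank K (LieModule.lowerCentralSeries K L L (k - 1)) = n - k ∧
      (∀ I : LieIdeal K L, IsLieAbelian I → finrank K I = n - k →
        I = LieModule.lowerCentralSeries K L L (k - 1)) ∧
      (n + 1) / 2 ≤ betaInv K L ∧ betaInv K L ≤ n - 3 := by
  open Stmt17Aux in
  have hD1nab : ¬ IsLieAbelian (LieModule.lowerCentralSeries K L L 1) := by
    have := hkmin 2 (by omega) (by omega)
    simpa using this
  -- every abelian ideal has finrank ≤ n - k, and if = n - k then it equals D (k-1)
  have classify : ∀ I : LieIdeal K L, IsLieAbelian I →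
      finrank K I ≤ n - k ∧ (finrank K I = n - k → I = LieModule.lowerCentralSeries K L L (k-1)) := by
    intro I hab
    have hle := abelian_ideal_le_D1 n (by omega) hdim hfiliform hD1nab I hab
    rcases eq_or_ne I ⊥ with h | h
    · constructor
      · rw [h]
        have : finrank K (⊥ : LieIdeal K L).toSubmodule = 0 := by
          rw [LieSubmodule.bot_toSubmodule]; exact finrank_bot K L
        have h0 : finrank K (⊥ : LieIdeal K L) = 0 := this
        omega
      · intro heq
        rw [h] at heq
        have : finrank K (⊥ : LieIdeal K L).toSubmodule = 0 := by
          rw [LieSubmodule.bot_toSubmodule]; exact finrank_bot K L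
        have h0 : finrank K (⊥ : LieIdeal K L) = 0 := this
        omega
    · obtain ⟨t, ht1, htn, hIt⟩ := ideal_classify n (by omega) hfiliform I hle h
      have htk : k ≤ t + 1 := by
        by_contra hcon
        have h2 := hkmin (t+1) (by omega) (by omega)
        rw [Nat.add_sub_cancel] at h2
        rw [hIt] at hab
        exact h2 hab
      have hfr : finrank K I = n - (t+1) := by
        rw [hIt]
        have := hfiliform (t+1) (by omega) (by omega)
        simpa using this
      constructor
      · rw [hfr]; omega
      · intro heq
        have : t + 1 = k := by
          rw [hfr] at heq
          omega
        rw [hIt, show t = k - 1 by omega]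
  have hCk : finrank K (LieModule.lowerCentralSeries K L L (k-1)) = n - k :=
    hfiliform k (by omega) (by omega)
  have hmem : (n - k) ∈ {m | ∃ I : LieIdeal K L, IsLieAbelian I ∧ finrank K I = m} :=
    ⟨LieModule.lowerCentralSeries K L L (k-1), hkab, hCk⟩
  have hbdd : ∀ m ∈ {m | ∃ I : LieIdeal K L, IsLieAbelian I ∧ finrank K I = m}, m ≤ n - k := by
    rintro m ⟨I, hab, rfl⟩
    exact (classify I hab).1
  have hbeta : betaInv K L = n - k := by
    apply le_antisymm
    · exact csSup_le ⟨n - k, hmem⟩ hbdd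
    · exact le_csSup ⟨n - k, hbdd⟩ hmem
  have h2k : 2 * k ≤ n := by
    apply two_k_le_n n k hk hn hfiliform
    have := hkmin (k-1) (by omega) (by omega)
    rwa [show k-1-1 = k-2 by omega] at this
  refine ⟨hbeta, hCk, ?_, ?_, ?_⟩
  · intro I hab heq
    exact (classify I hab).2 heq
  · rw [hbeta]; omega
  · rw [hbeta]; omega
end

section
/- Let f_n be the standard graded filiform Lie algebra of dimension n ≥ 4, with basis e_1,…,e_n and brackets [e_1,e_i] = e_{i+1} for 2 ≤ i ≤ n−1. Then the span of e_1 and e_n is a maximal abelian subalgebra (with respect to inclusion) of dimension 2, which is not of maximal dimension since α(f_n) = n−1. -/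
open Module

lemma lie_span_zero {K L : Type*} [Field K] [LieRing L] [LieAlgebra K L] (s : Set L)
    (h : ∀ x ∈ s, ∀ y ∈ s, ⁅x, y⁆ = 0) :
    ∀ x ∈ Submodule.span K s, ∀ y ∈ Submodule.span K s, ⁅x, y⁆ = (0 : L) := by
  intro x hx
  induction hx using Submodule.span_induction with
  | mem x hxs =>
    intro y hy
    induction hy using Submodule.span_induction with
    | mem y hys => exact h x hxs y hys
    | zero => simp
    | add y z _ _ hy hz => rw [lie_add, hy, hz, add_zero]
    | smul a y _ hy => rw [lie_smul, hy, smul_zero]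
  | zero => intro y hy; simp
  | add x z _ _ hx hz => intro y hy; rw [add_lie, hx _ hy, hz _ hy, add_zero]
  | smul a x _ hx => intro y hy; rw [smul_lie, hx _ hy, smul_zero]

/-- In the standard graded filiform Lie algebra f_n (n ≥ 4), the span of e_1 and e_n is a
maximal abelian subalgebra (with respect to inclusion) of dimension 2, which is not of
maximal dimension, since α(f_n) = n - 1. -/
theorem stmt_19 (K L : Type*) [Field K] [CharZero K] [LieRing L] [LieAlgebra K L]
    (n : ℕ) (hn : 4 ≤ n) (b : Basis (Fin n) K L)
    (hbr : ∀ i : ℕ, 1 ≤ i → ∀ hi : i + 1 < n,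
      ⁅b ⟨0, by omega⟩, b ⟨i, by omega⟩⁆ = b ⟨i + 1, hi⟩)
    (hzero : ∀ i j : ℕ, 1 ≤ i → 1 ≤ j → ∀ hi : i < n, ∀ hj : j < n,
      ⁅b ⟨i, hi⟩, b ⟨j, hj⟩⁆ = 0)
    (h1n : ⁅b ⟨0, by omega⟩, b ⟨n - 1, by omega⟩⁆ = 0) :
    (∃ a : LieSubalgebra K L,
      (a : Submodule K L) = Submodule.span K {b ⟨0, by omega⟩, b ⟨n - 1, by omega⟩} ∧
      IsLieAbelian a ∧ finrank K a = 2 ∧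
      (∀ a' : LieSubalgebra K L, IsLieAbelian a' → a ≤ a' → a' = a)) ∧
      alphaInv K L = n - 1 := by
  
  haveI : Module.Finite K L := Module.Finite.of_basis b
  have hfr : finrank K L = n := by rw [finrank_eq_card_basis b, Fintype.card_fin]
  set u : L := b ⟨0, by omega⟩ with hu
  set v : L := b ⟨n - 1, by omega⟩ with hv
  -- basic brackets
  have hvu : ⁅v, u⁆ = 0 := by rw [← lie_skew, h1n, neg_zero]
  have hpair : ∀ x ∈ ({u, v} : Set L), ∀ y ∈ ({u, v} : Set L), ⁅x, y⁆ = 0 := by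
    rintro x (rfl | rfl) y (rfl | rfl)
    · exact lie_self _
    · exact h1n
    · exact hvu
    · exact lie_self _
  -- bracket of u with basis vectors
  have hw : ∀ i : Fin n, ⁅u, b i⁆ =
      if h : 1 ≤ (i : ℕ) ∧ (i : ℕ) + 1 < n then b ⟨(i : ℕ) + 1, h.2⟩ else 0 := by
    intro i
    by_cases h : 1 ≤ (i : ℕ) ∧ (i : ℕ) + 1 < n
    · rw [dif_pos h]
      exact hbr i h.1 h.2
    · rw [dif_neg h]
      push_neg at h
      by_cases h0 : (i : ℕ) = 0
      · have : i = ⟨0, by omega⟩ := by ext; exact h0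
        rw [this]; exact lie_self _
      · have h1 : 1 ≤ (i : ℕ) := by omega
        have h2 : (i : ℕ) = n - 1 := by have := h h1; have := i.isLt; omega
        have : i = ⟨n - 1, by omega⟩ := by ext; exact h2
        rw [this]; exact h1n
  -- the subalgebra A
  set A : LieSubalgebra K L :=
    { Submodule.span K ({u, v} : Set L) with
      lie_mem' := fun {x y} hx hy => by
        have hx' : x ∈ Submodule.span K ({u, v} : Set L) := hx
        have hy' : y ∈ Submodule.span K ({u, v} : Set L) := hy
        show ⁅x, y⁆ ∈ Submodule.span K ({u, v} : Set L)
        rw [lie_span_zero _ hpair x hx' y hy']; exact Submodule.zero_mem _ } with hA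
  have hAcoe : (A : Submodule K L) = Submodule.span K ({u, v} : Set L) := rfl
  have hAmem : ∀ x, x ∈ A ↔ x ∈ Submodule.span K ({u, v} : Set L) := fun _ => Iff.rfl
  have hAab : IsLieAbelian A := by
    constructor
    intro x y
    ext
    exact lie_span_zero _ hpair x.1 x.2 y.1 y.2
  -- finrank of A
  have hne : (⟨0, by omega⟩ : Fin n) ≠ ⟨n - 1, by omega⟩ := by
    intro h; rw [Fin.mk.injEq] at h; omega
  have hrange : Set.range ![u, v] = ({u, v} : Set L) := by
    ext z
    constructor
    · rintro ⟨i, rfl⟩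
      fin_cases i
      · exact Or.inl rfl
      · exact Or.inr rfl
    · rintro (rfl | rfl)
      · exact ⟨0, rfl⟩
      · exact ⟨1, rfl⟩
  have hindep : LinearIndependent K ![u, v] := by
    have hf : Function.Injective (![⟨0, by omega⟩, ⟨n - 1, by omega⟩] : Fin 2 → Fin n) := by
      intro i j hij
      fin_cases i <;> fin_cases j <;> simp_all
    have := b.linearIndependent.comp _ hf
    have heq : b ∘ (![⟨0, by omega⟩, ⟨n - 1, by omega⟩] : Fin 2 → Fin n) = ![u, v] := by
      funext i; fin_cases i <;> rfl
    rwa [heq] at this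
  have hfin2 : finrank K A = 2 := by
    have : finrank K (Submodule.span K (Set.range ![u, v])) = 2 := by
      rw [finrank_span_eq_card hindep, Fintype.card_fin]
    rw [hrange] at this
    exact this
  -- maximality
  have hmax : ∀ a' : LieSubalgebra K L, IsLieAbelian a' → A ≤ a' → a' = A := by
    intro a' hab hle
    refine le_antisymm ?_ hle
    intro x hx
    have huA : u ∈ A := (hAmem u).2 (Submodule.subset_span (Or.inl rfl))
    have hux : ⁅u, x⁆ = 0 := by
      have h0 : (⁅(⟨u, hle huA⟩ : a'), (⟨x, hx⟩ : a')⁆ : a') = 0 := trivial_lie_zero _ _ _ _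
      have := congrArg (Subtype.val) h0
      simp only [LieSubalgebra.coe_bracket, ZeroMemClass.coe_zero] at this
      exact this
    -- coordinates of x
    have hrep : ∀ (k : ℕ) (_ : 1 ≤ k) (hk2 : k + 1 < n), b.repr x ⟨k, by omega⟩ = 0 := by
      intro k hk1 hk2
      have hsum : ∑ i : Fin n, b.repr x i • ⁅u, b i⁆ = 0 := by
        have h1 := map_sum (LieAlgebra.ad K L u) (fun i => b.repr x i • b i) Finset.univ
        simp only [LieAlgebra.ad_apply] at h1
        rw [b.sum_repr, hux] at h1
        calc ∑ i : Fin n, b.repr x i • ⁅u, b i⁆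
            = ∑ i : Fin n, ⁅u, b.repr x i • b i⁆ :=
              Finset.sum_congr rfl fun i _ => (lie_smul _ _ _).symm
          _ = 0 := h1.symm
      have := congrArg (fun z => b.repr z ⟨k + 1, hk2⟩) hsum
      simp only [map_sum, map_smul, Finsupp.coe_finset_sum, Finset.sum_apply,
        Finsupp.smul_apply, map_zero, Finsupp.coe_zero, Pi.zero_apply] at this
      rw [Finset.sum_eq_single (⟨k, by omega⟩ : Fin n)] at this
      · rw [hw, dif_pos ⟨hk1, hk2⟩, b.repr_self, Finsupp.single_apply, if_pos rfl,
          smul_eq_mul, mul_one] at this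
        exact this
      · intro i _ hik
        rw [hw]
        by_cases h : 1 ≤ (i : ℕ) ∧ (i : ℕ) + 1 < n
        · rw [dif_pos h, b.repr_self, Finsupp.single_apply, if_neg, smul_zero]
          intro hc
          rw [Fin.mk.injEq] at hc
          apply hik
          ext
          show (i : ℕ) = k
          omega
        · rw [dif_neg h, map_zero, Finsupp.coe_zero, Pi.zero_apply, smul_zero]
      · intro h; exact absurd (Finset.mem_univ _) h
    have : x ∈ Submodule.span K ({u, v} : Set L) := by
      rw [Submodule.mem_span_pair]
      refine ⟨b.repr x ⟨0, by omega⟩, b.repr x ⟨n - 1, by omega⟩, ?_⟩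
      conv_rhs => rw [← b.sum_repr x]
      rw [← Finset.sum_subset (Finset.subset_univ ({⟨0, by omega⟩, ⟨n - 1, by omega⟩} :
        Finset (Fin n)))]
      · rw [Finset.sum_pair hne]
      · intro i _ hins
        simp only [Finset.mem_insert, Finset.mem_singleton] at hins
        push_neg at hins
        have h1 : 1 ≤ (i : ℕ) := by
          rcases Nat.eq_zero_or_pos (i : ℕ) with h | h
          · exact absurd (by ext; exact h) hins.1
          · exact h
        have h2 : (i : ℕ) + 1 < n := by
          have := i.isLt
          rcases Nat.lt_or_ge ((i : ℕ) + 1) n with h | h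
          · exact h
          · refine absurd ?_ hins.2
            ext
            show (i : ℕ) = n - 1
            omega
        have : b.repr x ⟨(i : ℕ), i.isLt⟩ = 0 := hrep (i : ℕ) h1 h2
        simp only [Fin.eta] at this
        rw [this, zero_smul]
    exact (hAmem x).2 this
  refine ⟨⟨A, hAcoe, hAab, hfin2, hmax⟩, ?_⟩
  -- alpha = n - 1
  -- W : abelian subalgebra of dim n-1
  set f : Fin (n - 1) → L := fun j => b ⟨(j : ℕ) + 1, by have := j.isLt; omega⟩ with hf
  have hWpair : ∀ x ∈ Set.range f, ∀ y ∈ Set.range f, ⁅x, y⁆ = 0 := by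
    rintro x ⟨i, rfl⟩ y ⟨j, rfl⟩
    exact hzero ((i : ℕ) + 1) ((j : ℕ) + 1) (by omega) (by omega)
      (by have := i.isLt; omega) (by have := j.isLt; omega)
  set W : LieSubalgebra K L :=
    { Submodule.span K (Set.range f) with
      lie_mem' := fun {x y} hx hy => by
        have hx' : x ∈ Submodule.span K (Set.range f) := hx
        have hy' : y ∈ Submodule.span K (Set.range f) := hy
        show ⁅x, y⁆ ∈ Submodule.span K (Set.range f)
        rw [lie_span_zero _ hWpair x hx' y hy']; exact Submodule.zero_mem _ } with hW
  have hWab : IsLieAbelian W := by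
    constructor
    intro x y
    ext
    exact lie_span_zero _ hWpair x.1 x.2 y.1 y.2
  have hWfin : finrank K W = n - 1 := by
    have hfinj : Function.Injective
        (fun j : Fin (n - 1) => (⟨(j : ℕ) + 1, by have := j.isLt; omega⟩ : Fin n)) := by
      intro i j hij
      rw [Fin.mk.injEq] at hij
      ext; omega
    have hind : LinearIndependent K f := by
      have := b.linearIndependent.comp _ hfinj
      exact this
    have : finrank K (Submodule.span K (Set.range f)) = n - 1 := by
      rw [finrank_span_eq_card hind, Fintype.card_fin]
    exact this
  -- upper bound
  have hub : ∀ m ∈ {m | ∃ a : LieSubalgebra K L, IsLieAbelian a ∧ finrank K a = m},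
      m ≤ n - 1 := by
    rintro m ⟨a, ha, rfl⟩
    have h1 : finrank K a ≤ n := by
      rw [← hfr]
      exact Submodule.finrank_le (a : Submodule K L)
    have h2 : finrank K a ≠ n := by
      intro h
      have htop : (a : Submodule K L) = ⊤ :=
        Submodule.eq_top_of_finrank_eq (by
          show finrank K (a : Submodule K L) = finrank K L
          rw [hfr]; exact h)
      have hb0 : u ∈ a := by
        have : u ∈ (a : Submodule K L) := htop ▸ Submodule.mem_top
        exact this
      have hb1 : b ⟨1, by omega⟩ ∈ a := by
        have : b ⟨1, by omega⟩ ∈ (a : Submodule K L) := htop ▸ Submodule.mem_top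
        exact this
      have h0 : (⁅(⟨u, hb0⟩ : a), (⟨b ⟨1, by omega⟩, hb1⟩ : a)⁆ : a) = 0 :=
        trivial_lie_zero _ _ _ _
      have := congrArg (Subtype.val) h0
      simp only [LieSubalgebra.coe_bracket, ZeroMemClass.coe_zero] at this
      rw [hbr 1 le_rfl (by omega)] at this
      exact b.ne_zero _ this
    omega
  have hmem : n - 1 ∈ {m | ∃ a : LieSubalgebra K L, IsLieAbelian a ∧ finrank K a = m} :=
    ⟨W, hWab, hWfin⟩
  show sSup _ = n - 1
  exact le_antisymm (csSup_le ⟨n - 1, hmem⟩ hub) (le_csSup ⟨n - 1, hub⟩ hmem)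
end
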